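/- arXiv:2508.19064 — 6 statements merged into one kernel-verified Lean document; each statement's English description precedes it below -/
import Mathlib

section
/- Let μ be a finite Borel measure on ℝ, A > 0, B ∈ ℝ, and define κ(z) = A·z + B + ∫_ℝ (1 + zν)/(ν − z) dμ(ν) for z in the open upper half-plane ℍ⁺ = {z ∈ ℂ : Im z > 0} (the integrand is bounded in ν for each such z). Then κ is holomorphic on ℍ⁺, and for every z ∈ ℍ⁺ its derivative satisfies Re κ'(z) = A + ∫_ℝ (1+ν²)·((ν − Re z)² − (Im z)²)/|ν − z|⁴ dμ(ν). -/
open MeasureTheory Complex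

lemma aux_ne {w : ℂ} (hw : 0 < w.im) (ν : ℝ) : (ν : ℂ) - w ≠ 0 := by
  intro h
  have h2 : ((ν:ℂ) - w).im = 0 := by rw [h]; simp
  simp [Complex.sub_im] at h2
  linarith

lemma aux_hasDerivAt (ν : ℝ) (w : ℂ) (hw : (ν:ℂ) - w ≠ 0) :
    HasDerivAt (fun u : ℂ => (1 + u * ν) / ((ν:ℂ) - u)) ((1 + (ν:ℂ)^2) / ((ν:ℂ) - w)^2) w := by
  have h1 : HasDerivAt (fun u : ℂ => 1 + u * (ν:ℂ)) (ν:ℂ) w := by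
    simpa using ((hasDerivAt_id w).mul_const (ν:ℂ)).const_add 1
  have h2 : HasDerivAt (fun u : ℂ => (ν:ℂ) - u) (-1) w := by
    simpa using (hasDerivAt_id w).const_sub (ν:ℂ)
  have h := h1.fun_div h2 hw
  refine h.congr_deriv ?_
  ring

lemma aux_cont (w : ℂ) (hw : 0 < w.im) :
    Continuous (fun ν : ℝ => (1 + w * ν) / ((ν:ℂ) - w)) :=
  (continuous_const.add (continuous_const.mul Complex.continuous_ofReal)).div
    (Complex.continuous_ofReal.sub continuous_const) (fun ν => aux_ne hw ν)

lemma key (μ : Measure ℝ) [IsFiniteMeasure μ] (z : ℂ) (hz : 0 < z.im) :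
    Integrable (fun ν : ℝ => (1 + (ν:ℂ)^2) / ((ν:ℂ) - z)^2) μ ∧
    HasDerivAt (fun w => ∫ ν : ℝ, (1 + w * ν) / ((ν:ℂ) - w) ∂μ)
      (∫ ν : ℝ, (1 + (ν:ℂ)^2) / ((ν:ℂ) - z)^2 ∂μ) z := by
  set ε := z.im / 2 with hεdef
  have hε0 : 0 < ε := by positivity
  have him : ∀ w ∈ Metric.ball z ε, ε ≤ w.im := by
    intro w hw
    have h1 : |(w - z).im| ≤ ‖(w - z)‖ := Complex.abs_im_le_norm _
    have h2 : ‖(w - z)‖ < ε := by simpa [Metric.mem_ball, Complex.dist_eq] using hw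
    have h3 := abs_lt.mp (lt_of_le_of_lt h1 h2)
    simp only [Complex.sub_im] at h3
    simp only [hεdef] at *
    linarith [h3.1]
  have habs : ∀ w ∈ Metric.ball z ε, ‖w‖ ≤ ‖z‖ + ε := by
    intro w hw
    have h2 : ‖(w - z)‖ < ε := by simpa [Metric.mem_ball, Complex.dist_eq] using hw
    calc ‖w‖ = ‖(w - z + z)‖ := by ring_nf
    _ ≤ ‖(w - z)‖ + ‖z‖ := norm_add_le _ _
    _ ≤ ‖z‖ + ε := by linarith
  set S : ℝ := ‖z‖ + ε with hSdef
  have hS : 0 ≤ S := by positivity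
  set C : ℝ := 2 + (1 + 2 * S^2) / ε^2 with hCdef
  have hbound : ∀ ν : ℝ, ∀ w ∈ Metric.ball z ε,
      ‖(1 + (ν:ℂ)^2) / ((ν:ℂ) - w)^2‖ ≤ C := by
    intro ν w hw
    have hwim := him w hw
    have hwabs := habs w hw
    set a := ‖((ν:ℂ) - w)‖ with hadef
    have ha1 : ε ≤ a := by
      have h1 : |((ν:ℂ) - w).im| ≤ a := Complex.abs_im_le_norm _
      have h2 : ((ν:ℂ) - w).im = -w.im := by simp [Complex.sub_im]
      rw [h2, abs_neg, abs_of_pos (by linarith : (0:ℝ) < w.im)] at h1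
      linarith
    have ha0 : 0 < a := lt_of_lt_of_le hε0 ha1
    have hνle : |ν| ≤ a + S := by
      have : ‖(ν:ℂ)‖ ≤ ‖((ν:ℂ) - w)‖ + ‖w‖ := by
        calc ‖(ν:ℂ)‖ = ‖((ν:ℂ) - w + w)‖ := by ring_nf
        _ ≤ _ := norm_add_le _ _
      rw [Complex.norm_real, Real.norm_eq_abs] at this
      linarith
    have hν2 : ν^2 ≤ (a + S)^2 := by nlinarith [abs_nonneg ν, _root_.sq_abs ν]
    have hnorm : ‖(1 + (ν:ℂ)^2) / ((ν:ℂ) - w)^2‖ = (1 + ν^2) / a^2 := by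
      rw [norm_div, norm_pow]
      have h1 : (1 + (ν:ℂ)^2) = ((1 + ν^2 : ℝ) : ℂ) := by push_cast; ring
      rw [h1, Complex.norm_real, Real.norm_eq_abs, abs_of_pos (by positivity : (0:ℝ) < 1 + ν^2)]
    rw [hnorm, div_le_iff₀ (by positivity)]
    have ht2 : 1 + 2 * S^2 ≤ (1 + 2 * S^2) / ε^2 * a^2 := by
      rw [div_mul_eq_mul_div, le_div_iff₀ (by positivity)]
      nlinarith [mul_le_mul_of_nonneg_left (show ε^2 ≤ a^2 by nlinarith) (show (0:ℝ) ≤ 1 + 2*S^2 by positivity)]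
    rw [hCdef]; nlinarith [ht2, hν2, sq_nonneg (a - S)]
  have hmem : {w : ℂ | 0 < w.im} ∈ nhds z :=
    (isOpen_lt continuous_const Complex.continuous_im).mem_nhds hz
  have hF_meas : ∀ᶠ w in nhds z, AEStronglyMeasurable (fun ν : ℝ => (1 + w * ν) / ((ν:ℂ) - w)) μ := by
    filter_upwards [hmem] with w hw
    exact (aux_cont w hw).aestronglyMeasurable
  have hF_int : Integrable (fun ν : ℝ => (1 + z * ν) / ((ν:ℂ) - z)) μ := by
    set M : ℝ := (1 + (‖z‖)^2) / z.im + ‖z‖ with hMdef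
    apply Integrable.mono' (integrable_const M) (aux_cont z hz).aestronglyMeasurable
    refine Filter.Eventually.of_forall fun ν => ?_
    set a := ‖((ν:ℂ) - z)‖ with hadef
    have ha1 : z.im ≤ a := by
      have h1 : |((ν:ℂ) - z).im| ≤ a := Complex.abs_im_le_norm _
      have h2 : ((ν:ℂ) - z).im = -z.im := by simp [Complex.sub_im]
      rw [h2, abs_neg, abs_of_pos hz] at h1
      linarith
    have ha0 : 0 < a := lt_of_lt_of_le hz ha1
    have hνle : |ν| ≤ a + ‖z‖ := by
      have : ‖(ν:ℂ)‖ ≤ ‖((ν:ℂ) - z)‖ + ‖z‖ := by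
        calc ‖(ν:ℂ)‖ = ‖((ν:ℂ) - z + z)‖ := by ring_nf
        _ ≤ _ := norm_add_le _ _
      rw [Complex.norm_real, Real.norm_eq_abs] at this
      linarith
    have hnum : ‖(1 + z * (ν:ℂ))‖ ≤ 1 + ‖z‖ * |ν| := by
      calc ‖(1 + z * (ν:ℂ))‖ ≤ ‖(1:ℂ)‖ + ‖z * (ν:ℂ)‖ := norm_add_le _ _
      _ = 1 + ‖z‖ * |ν| := by
          simp [map_mul]
    rw [norm_div]
    rw [div_le_iff₀ (show (0:ℝ) < ‖(ν:ℂ) - z‖ by exact ha0)]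
    have h3 : ‖(ν:ℂ) - z‖ = a := by simp [hadef]
    rw [h3]
    have ht2 : 1 + (‖z‖)^2 ≤ (1 + (‖z‖)^2) / z.im * a := by
      rw [div_mul_eq_mul_div, le_div_iff₀ hz]
      nlinarith [mul_le_mul_of_nonneg_left ha1 (show (0:ℝ) ≤ 1 + (‖z‖)^2 by positivity)]
    calc ‖(1 + z * (ν:ℂ))‖ ≤ 1 + ‖z‖ * |ν| := hnum
    _ ≤ 1 + ‖z‖ * (a + ‖z‖) := by
        nlinarith [norm_nonneg z]
    _ ≤ M * a := by
        rw [hMdef]; nlinarith [norm_nonneg z]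
  have hF'_meas : AEStronglyMeasurable (fun ν : ℝ => (1 + (ν:ℂ)^2) / ((ν:ℂ) - z)^2) μ := by
    refine Continuous.aestronglyMeasurable ?_
    exact (continuous_const.add (Complex.continuous_ofReal.pow 2)).div
      ((Complex.continuous_ofReal.sub continuous_const).pow 2)
      (fun ν => pow_ne_zero 2 (aux_ne hz ν))
  have h_bound : ∀ᵐ ν : ℝ ∂μ, ∀ w ∈ Metric.ball z ε,
      ‖(1 + (ν:ℂ)^2) / ((ν:ℂ) - w)^2‖ ≤ C :=
    Filter.Eventually.of_forall fun ν w hw => hbound ν w hw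
  have h_diff : ∀ᵐ ν : ℝ ∂μ, ∀ w ∈ Metric.ball z ε,
      HasDerivAt (fun u : ℂ => (1 + u * ν) / ((ν:ℂ) - u)) ((1 + (ν:ℂ)^2) / ((ν:ℂ) - w)^2) w := by
    refine Filter.Eventually.of_forall fun ν w hw => ?_
    exact aux_hasDerivAt ν w (aux_ne (lt_of_lt_of_le hε0 (him w hw)) ν)
  exact hasDerivAt_integral_of_dominated_loc_of_deriv_le (Metric.ball_mem_nhds z hε0) hF_meas hF_int hF'_meas
    h_bound (integrable_const C) h_diff

lemma re_formula (z : ℂ) (hz : 0 < z.im) (ν : ℝ) :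
    ((1 + (ν:ℂ)^2) / ((ν:ℂ) - z)^2).re
      = (1 + ν^2) * ((ν - z.re)^2 - z.im^2) / (‖((ν:ℂ) - z)‖)^4 := by
  have hne := aux_ne hz ν
  have h0 : Complex.normSq ((ν:ℂ) - z) ≠ 0 := by simpa [Complex.normSq_eq_zero] using hne
  have habs : (‖((ν:ℂ) - z)‖)^4 = (Complex.normSq ((ν:ℂ) - z))^2 := by
    rw [show (4:ℕ) = 2*2 from rfl, pow_mul, Complex.sq_norm]
  rw [Complex.div_re, habs]
  have hnsq : Complex.normSq (((ν:ℂ) - z)^2) = (Complex.normSq ((ν:ℂ) - z))^2 := by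
    rw [map_pow]
  rw [hnsq]
  simp only [Complex.normSq_apply, Complex.sub_re, Complex.sub_im, Complex.ofReal_re,
    Complex.ofReal_im, Complex.add_re, Complex.add_im, Complex.one_re, Complex.one_im,
    pow_two, Complex.mul_re, Complex.mul_im]
  have hd : (0:ℝ) < ((ν - z.re) * (ν - z.re) + (0 - z.im) * (0 - z.im)) := by nlinarith
  field_simp
  ring

theorem stmt3 (μ : Measure ℝ) [IsFiniteMeasure μ] (A B : ℝ) (hA : 0 < A)
    (κ : ℂ → ℂ)
    (hκ : ∀ z : ℂ, 0 < z.im →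
      κ z = A * z + B + ∫ ν : ℝ, (1 + z * (ν : ℂ)) / ((ν : ℂ) - z) ∂μ) :
    DifferentiableOn ℂ κ {z : ℂ | 0 < z.im} ∧
    ∀ z : ℂ, 0 < z.im →
      (deriv κ z).re
        = A + ∫ ν : ℝ, (1 + ν ^ 2) * ((ν - z.re) ^ 2 - z.im ^ 2) /
            ‖(ν : ℂ) - z‖ ^ 4 ∂μ := by
  have hder : ∀ z : ℂ, 0 < z.im →
      HasDerivAt κ ((A:ℂ) + ∫ ν : ℝ, (1 + (ν:ℂ)^2) / ((ν:ℂ) - z)^2 ∂μ) z := by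
    intro z hz
    have h1 := (key μ z hz).2
    have hlin : HasDerivAt (fun w : ℂ => (A:ℂ) * w + B) (A:ℂ) z := by
      simpa using ((hasDerivAt_id z).const_mul (A:ℂ)).add_const (B:ℂ)
    have h2 := hlin.add h1
    apply h2.congr_of_eventuallyEq
    have hmem : {w : ℂ | 0 < w.im} ∈ nhds z :=
      (isOpen_lt continuous_const Complex.continuous_im).mem_nhds hz
    filter_upwards [hmem] with w hw
    exact hκ w hw
  constructor
  · exact fun z hz => (hder z hz).differentiableAt.differentiableWithinAt
  · intro z hz
    rw [(hder z hz).deriv]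
    have hint := (key μ z hz).1
    have hre := integral_re (𝕜 := ℂ) hint
    simp only [RCLike.re_to_complex] at hre
    rw [Complex.add_re, Complex.ofReal_re, ← hre]
    congr 1
    refine integral_congr_ae (Filter.Eventually.of_forall fun ν => ?_)
    exact re_formula z hz ν
end

section
/- Let κ : ℂ → ℂ be continuous on the closed upper half-plane {z : Im z ≥ 0}, holomorphic on ℍ⁺ = {z : Im z > 0}, satisfy Im κ(z) ≥ 0 for all z with Im z ≥ 0, and be non-constant on ℍ⁺. Let f : ℝ → ℂ be integrable with f(t) = 0 for almost every t < 0. If ∫_ℝ f(t)·e^{i κ(ω) t} dt = 0 for every ω ∈ ℝ (the integral is absolutely convergent since |e^{iκ(ω)t}| ≤ 1 on the support of f), then f = 0 almost everywhere. -/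
open MeasureTheory Complex

open Filter Set Metric
open scoped FourierTransform Real Topology


section CD
open scoped ContDiff


lemma smooth_compact_toSchwartz (g : ℝ → ℝ) (hg : ContDiff ℝ ∞ g) (hsupp : HasCompactSupport g) :
    ∃ G : SchwartzMap ℝ ℂ, ⇑G = fun x => (g x : ℂ) := by
  have hGc : ContDiff ℝ ∞ (fun x : ℝ => (g x : ℂ)) :=
    Complex.ofRealCLM.contDiff.comp hg
  have hGsupp : HasCompactSupport (fun x : ℝ => (g x : ℂ)) :=
    hsupp.comp_left (g := Complex.ofReal) Complex.ofReal_zero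
  refine ⟨⟨fun x => (g x : ℂ), hGc, ?_⟩, rfl⟩
  intro k n
  have h1 : HasCompactSupport (iteratedFDeriv ℝ n (fun x : ℝ => (g x : ℂ))) :=
    hGsupp.iteratedFDeriv n
  have hcont : Continuous (fun x : ℝ => ‖x‖ ^ k * ‖iteratedFDeriv ℝ n (fun x : ℝ => (g x : ℂ)) x‖) := by
    exact (continuous_norm.pow k).mul (hGc.continuous_iteratedFDeriv (mod_cast le_top)).norm
  have h2 : HasCompactSupport
      (fun x : ℝ => ‖x‖ ^ k * ‖iteratedFDeriv ℝ n (fun x : ℝ => (g x : ℂ)) x‖) :=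
    h1.norm.mul_left
  obtain ⟨C, hC⟩ := hcont.bounded_above_of_compact_support h2
  exact ⟨C, fun x => (le_abs_self _).trans ((Real.norm_eq_abs _) ▸ hC x)⟩

lemma fourier_inj {f : ℝ → ℂ} (hf : Integrable f) (h : ∀ ξ : ℝ, 𝓕 f ξ = 0) :
    f =ᵐ[volume] 0 := by
  apply ae_eq_zero_of_integral_contDiff_smul_eq_zero (hf.locallyIntegrable)
  intro g hg hsupp
  obtain ⟨G, hG⟩ := smooth_compact_toSchwartz g hg hsupp
  set h₀ : SchwartzMap ℝ ℂ := (FourierTransform.fourierCLE ℂ (SchwartzMap ℝ ℂ)).symm G with hh₀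
  have hFh : 𝓕 (⇑h₀) = ⇑G := by
    have := SchwartzMap.fourierTransformCLE_apply (R := ℂ) h₀
    rw [hh₀, (FourierTransform.fourierCLE ℂ (SchwartzMap ℝ ℂ)).apply_symm_apply G] at this
    rw [← SchwartzMap.fourier_coe, this]
  have hflip : (innerₗ ℝ).flip = innerₗ ℝ := by
    apply LinearMap.ext; intro x; apply LinearMap.ext; intro y
    exact real_inner_comm x y
  have key := VectorFourier.integral_fourierIntegral_smul_eq_flip (μ := (volume : Measure ℝ))
    (ν := (volume : Measure ℝ)) (L := innerₗ ℝ) (f := ⇑h₀) (g := f)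
    Real.continuous_fourierChar continuous_inner h₀.integrable hf
  rw [hflip] at key
  have lhs_eq : (∫ x, g x • f x) = ∫ ξ, (VectorFourier.fourierIntegral 𝐞 volume (innerₗ ℝ) (⇑h₀) ξ) • f ξ := by
    congr 1; ext x
    have : VectorFourier.fourierIntegral 𝐞 volume (innerₗ ℝ) (⇑h₀) x = 𝓕 (⇑h₀) x := rfl
    rw [this, hFh, hG]
    rw [smul_eq_mul, Complex.real_smul]
  rw [lhs_eq, key]
  have : ∀ x : ℝ, VectorFourier.fourierIntegral 𝐞 volume (innerₗ ℝ) f x = 0 := h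
  simp only [this, smul_zero, integral_zero]

lemma texp_bound {a t : ℝ} (ha : 0 < a) (ht : 0 ≤ t) : t * Real.exp (-(a * t)) ≤ 1 / a := by
  rw [Real.exp_neg, ← div_eq_mul_inv, div_le_div_iff₀ (Real.exp_pos _) ha]
  nlinarith [Real.add_one_le_exp (a * t)]

section Main

variable {f : ℝ → ℂ}

-- pointwise a.e. bound
lemma habs (hcausal : ∀ᵐ t : ℝ, t < 0 → f t = 0) :
    ∀ z : ℂ, 0 ≤ z.im → ∀ᵐ t : ℝ, ‖f t * Complex.exp (Complex.I * z * t)‖ ≤ ‖f t‖ := by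
  intro z hz
  filter_upwards [hcausal] with t ht
  rcases lt_or_ge t 0 with h | h
  · rw [ht h]; simp
  · rw [norm_mul]
    apply mul_le_of_le_one_right (norm_nonneg _)
    rw [Complex.norm_exp, Real.exp_le_one_iff]
    have : (Complex.I * z * t).re = -z.im * t := by
      simp [Complex.mul_re, Complex.mul_im]
    rw [this]
    nlinarith

lemma hmeas (hf : Integrable f) (z : ℂ) :
    AEStronglyMeasurable (fun t : ℝ => f t * Complex.exp (Complex.I * z * t)) volume :=
  hf.1.mul (Continuous.aestronglyMeasurable (by fun_prop))

lemma hInt (hf : Integrable f) (hcausal : ∀ᵐ t : ℝ, t < 0 → f t = 0) {z : ℂ} (hz : 0 ≤ z.im) :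
    Integrable (fun t : ℝ => f t * Complex.exp (Complex.I * z * t)) := by
  refine hf.norm.mono (hmeas hf z) ?_
  filter_upwards [habs hcausal z hz] with t ht
  simpa using ht

end Main

section Main2
variable {f : ℝ → ℂ}

lemma hFcont (hf : Integrable f) (hcausal : ∀ᵐ t : ℝ, t < 0 → f t = 0) :
    ContinuousOn (fun z : ℂ => ∫ t : ℝ, f t * Complex.exp (Complex.I * z * t))
      {z : ℂ | 0 ≤ z.im} := by
  apply continuousOn_of_dominated (bound := fun t => ‖f t‖)
  · exact fun z _ => hmeas hf z
  · exact fun z hz => habs hcausal z hz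
  · exact hf.norm
  · exact ae_of_all _ fun t => Continuous.continuousOn (by fun_prop)

lemma hFdiff (hf : Integrable f) (hcausal : ∀ᵐ t : ℝ, t < 0 → f t = 0) :
    DifferentiableOn ℂ (fun z : ℂ => ∫ t : ℝ, f t * Complex.exp (Complex.I * z * t))
      {z : ℂ | 0 < z.im} := by
  intro z₀ hz₀
  have hz₀' : 0 < z₀.im := hz₀
  set ε := z₀.im / 2 with hε
  have hεpos : 0 < ε := by positivity
  have key := hasDerivAt_integral_of_dominated_loc_of_deriv_le (μ := volume) (x₀ := z₀)
    (F := fun (z : ℂ) (t : ℝ) => f t * Complex.exp (Complex.I * z * t))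
    (F' := fun (z : ℂ) (t : ℝ) => f t * (Complex.I * t * Complex.exp (Complex.I * z * t)))
    (bound := fun t => (1 / ε) * ‖f t‖) (ball_mem_nhds z₀ hεpos)
    (.of_forall fun z => hmeas hf z) (hInt hf hcausal hz₀'.le)
    (hf.1.mul (Continuous.aestronglyMeasurable (by fun_prop))) ?_
    (hf.norm.const_mul (1 / ε)) ?_
  · exact key.2.differentiableAt.differentiableWithinAt
  · -- bound
    filter_upwards [hcausal] with t ht z hz
    rcases lt_or_ge t 0 with h | h
    · rw [ht h]; simp only [zero_mul, norm_zero]; positivity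
    · have himz : ε ≤ z.im := by
        have h1 : |z.im - z₀.im| ≤ ‖z - z₀‖ := by
          simpa using Complex.abs_im_le_norm (z - z₀)
        have h2 : ‖z - z₀‖ < ε := by
          rwa [mem_ball, Complex.dist_eq] at hz
        have := abs_sub_lt_iff.1 (lt_of_le_of_lt h1 h2)
        simp only [hε] at *
        linarith [this.2]
      have hre : (Complex.I * z * (t : ℂ)).re = -(z.im * t) := by
        simp [Complex.mul_re, Complex.mul_im]
        try ring
      have hnorm : ‖f t * (Complex.I * t * Complex.exp (Complex.I * z * t))‖
          = ‖f t‖ * (t * Real.exp (-(z.im * t))) := by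
        rw [norm_mul, norm_mul, norm_mul, Complex.norm_I, one_mul, Complex.norm_real,
          Real.norm_eq_abs, _root_.abs_of_nonneg h,
          Complex.norm_exp, hre]
      rw [hnorm, mul_comm (1 / ε) ‖f t‖]
      apply mul_le_mul_of_nonneg_left _ (norm_nonneg _)
      calc t * Real.exp (-(z.im * t)) ≤ t * Real.exp (-(ε * t)) := by
            apply mul_le_mul_of_nonneg_left _ h
            apply Real.exp_le_exp.2
            nlinarith
        _ ≤ 1 / ε := texp_bound hεpos h
  · -- differentiability
    refine .of_forall fun t => fun z _ => ?_
    have h1 : HasDerivAt (fun z : ℂ => Complex.I * z * t) (Complex.I * t) z := by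
      simpa using ((hasDerivAt_id z).const_mul Complex.I).mul_const (t : ℂ)
    have h2 := (h1.cexp).const_mul (f t)
    convert h2 using 1
    · rfl
    ring

end Main2

end CD

theorem stmt4 (κ : ℂ → ℂ)
    (hcont : ContinuousOn κ {z : ℂ | 0 ≤ z.im})
    (hholo : DifferentiableOn ℂ κ {z : ℂ | 0 < z.im})
    (him : ∀ z : ℂ, 0 ≤ z.im → 0 ≤ (κ z).im)
    (hnonconst : ∃ z w : ℂ, 0 < z.im ∧ 0 < w.im ∧ κ z ≠ κ w)
    (f : ℝ → ℂ) (hf : Integrable f)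
    (hcausal : ∀ᵐ t : ℝ, t < 0 → f t = 0)
    (hvanish : ∀ ω : ℝ, ∫ t : ℝ, f t * Complex.exp (Complex.I * κ (ω : ℂ) * (t : ℂ)) = 0) :
    f =ᵐ[volume] 0 := by
  set F : ℂ → ℂ := fun z => ∫ t : ℝ, f t * Complex.exp (Complex.I * z * t) with hFdef
  have hFc : ContinuousOn F {z : ℂ | 0 ≤ z.im} := hFcont hf hcausal
  have hFd : DifferentiableOn ℂ F {z : ℂ | 0 < z.im} := hFdiff hf hcausal
  have hU : IsOpen {z : ℂ | 0 < z.im} := isOpen_lt continuous_const Complex.continuous_im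
  have hUconn : IsPreconnected {z : ℂ | 0 < z.im} :=
    (convex_halfSpace_im_gt 0).isPreconnected
  have hκana : AnalyticOnNhd ℂ κ {z : ℂ | 0 < z.im} := hholo.analyticOnNhd hU
  -- open mapping
  have hopen : ∀ s ⊆ {z : ℂ | 0 < z.im}, IsOpen s → IsOpen (κ '' s) := by
    rcases hκana.is_constant_or_isOpen hUconn with hconst | hop
    · obtain ⟨c, hc⟩ := hconst
      obtain ⟨z, w, hz, hw, hne⟩ := hnonconst
      exact absurd ((hc z hz).trans (hc w hw).symm) hne
    · exact hop
  have hmapsκ : MapsTo κ {z : ℂ | 0 < z.im} {z : ℂ | 0 < z.im} := by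
    intro w hw
    have hio : IsOpen (κ '' {z : ℂ | 0 < z.im}) := hopen _ subset_rfl hU
    have hsub : κ '' {z : ℂ | 0 < z.im} ⊆ {z : ℂ | 0 ≤ z.im} := by
      rintro _ ⟨x, hx, rfl⟩; exact him x (le_of_lt hx)
    obtain ⟨ε, hε, hball⟩ := Metric.isOpen_iff.1 hio (κ w) ⟨w, hw, rfl⟩
    by_contra hle
    have h0 : (κ w).im = 0 := le_antisymm (not_lt.1 hle) (him w (le_of_lt hw))
    have hmem : κ w - (ε / 2 : ℝ) * Complex.I ∈ ball (κ w) ε := by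
      rw [mem_ball, dist_eq_norm,
        show κ w - (ε / 2 : ℝ) * Complex.I - κ w = -(((ε / 2 : ℝ) : ℂ) * Complex.I) from by ring,
        norm_neg, norm_mul, Complex.norm_real, Complex.norm_I, mul_one, Real.norm_eq_abs,
        _root_.abs_of_nonneg (by positivity : (0:ℝ) ≤ ε / 2)]
      linarith
    have := hsub (hball hmem)
    simp only [mem_setOf_eq, Complex.sub_im, Complex.mul_im, Complex.ofReal_re, Complex.I_im,
      Complex.ofReal_im, Complex.I_re, h0] at this
    nlinarith
  -- the composed function on the right half-plane
  set g : ℂ → ℂ := fun z => F (κ (Complex.I * z)) with hgdef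
  have hrot : ∀ z : ℂ, 0 < z.re → 0 < (Complex.I * z).im := by
    intro z hz; simpa [Complex.mul_im] using hz
  have hrot' : ∀ z : ℂ, 0 ≤ z.re → 0 ≤ (Complex.I * z).im := by
    intro z hz; simpa [Complex.mul_im] using hz
  have hC : (0 : ℝ) ≤ ∫ t : ℝ, ‖f t‖ := integral_nonneg fun t => norm_nonneg _
  have hFbound : ∀ z : ℂ, 0 ≤ z.im → ‖F z‖ ≤ ∫ t : ℝ, ‖f t‖ := by
    intro z hz
    calc ‖F z‖ ≤ ∫ t : ℝ, ‖f t * Complex.exp (Complex.I * z * t)‖ :=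
          norm_integral_le_integral_norm _
      _ ≤ ∫ t : ℝ, ‖f t‖ :=
          integral_mono_ae (hInt hf hcausal hz).norm hf.norm (habs hcausal z hz)
  have hgd : DiffContOnCl ℂ g {z : ℂ | 0 < z.re} := by
    constructor
    · intro z hz
      have h1 : DifferentiableAt ℂ (fun z : ℂ => Complex.I * z) z :=
        (differentiable_id.const_mul Complex.I) z
      have h2 : DifferentiableAt ℂ κ (Complex.I * z) :=
        (hholo _ (hrot z hz)).differentiableAt (hU.mem_nhds (hrot z hz))
      have h3 : DifferentiableAt ℂ F (κ (Complex.I * z)) :=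
        (hFd _ (hmapsκ (hrot z hz))).differentiableAt (hU.mem_nhds (hmapsκ (hrot z hz)))
      have h21 : DifferentiableAt ℂ (fun z : ℂ => κ (Complex.I * z)) z := h2.comp z h1
      exact (h3.comp z h21).differentiableWithinAt
    · have hcl : closure {z : ℂ | 0 < z.re} ⊆ {z : ℂ | 0 ≤ z.re} :=
        closure_minimal (fun z hz => show (0:ℝ) ≤ z.re from le_of_lt hz)
          (isClosed_le continuous_const Complex.continuous_re)
      refine ContinuousOn.mono ?_ hcl
      refine hFc.comp (hcont.comp ((continuous_const.mul continuous_id).continuousOn) ?_) ?_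
      · intro z hz; exact hrot' z hz
      · intro z hz; exact him _ (hrot' z hz)
  have hgbd : ∀ z : ℂ, 0 < z.re → ‖g z‖ ≤ ∫ t : ℝ, ‖f t‖ := fun z hz =>
    hFbound _ (him _ (hrot' z hz.le))
  have hgzero : ∀ x : ℝ, g ((x : ℂ) * Complex.I) = 0 := by
    intro x
    have harg : Complex.I * ((x : ℂ) * Complex.I) = ((-x : ℝ) : ℂ) := by
      push_cast
      rw [mul_comm Complex.I _, mul_assoc, Complex.I_mul_I]
      ring
    rw [hgdef]
    simp only []
    rw [harg, hFdef]
    exact hvanish (-x)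
  have hPL : ∀ z : ℂ, 0 ≤ z.re → ‖g z‖ ≤ 0 := by
    intro z hz
    refine PhragmenLindelof.right_half_plane_of_bounded_on_real hgd ?_ ?_ ?_ hz
    · refine ⟨1, one_lt_two, 0, ?_⟩
      refine Asymptotics.IsBigO.of_bound (∫ t : ℝ, ‖f t‖) ?_
      rw [eventually_inf_principal]
      refine Eventually.of_forall fun z hz => ?_
      simpa using hgbd z hz
    · refine ⟨∫ t : ℝ, ‖f t‖, ?_⟩
      rw [eventually_map]
      filter_upwards [eventually_ge_atTop (0 : ℝ)] with x hx
      exact hFbound _ (him _ (by simpa [Complex.mul_im] using hx))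
    · intro x; rw [hgzero x]; simp
  have hFκ : ∀ w : ℂ, 0 ≤ w.im → F (κ w) = 0 := by
    intro w hw
    have harg : Complex.I * -(Complex.I * w) = w := by
      rw [mul_neg, ← mul_assoc, Complex.I_mul_I]; ring
    have hre : 0 ≤ (-(Complex.I * w)).re := by
      simpa [Complex.mul_re] using hw
    have := hPL _ hre
    rw [hgdef] at this
    simp only [harg] at this
    exact norm_le_zero_iff.1 this
  -- identity theorem
  have hFana : AnalyticOnNhd ℂ F {z : ℂ | 0 < z.im} := hFd.analyticOnNhd hU
  obtain ⟨z₁, _, hz₁, _, _⟩ := hnonconst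
  have himg_open : IsOpen (κ '' {z : ℂ | 0 < z.im}) := hopen _ subset_rfl hU
  have hev : F =ᶠ[𝓝 (κ z₁)] 0 := by
    filter_upwards [himg_open.mem_nhds ⟨z₁, hz₁, rfl⟩] with y hy
    obtain ⟨x, hx, rfl⟩ := hy
    exact hFκ x (le_of_lt hx)
  have hF0 : EqOn F 0 {z : ℂ | 0 < z.im} :=
    hFana.eqOn_zero_of_preconnected_of_eventuallyEq_zero hUconn (hmapsκ hz₁) hev
  -- boundary values
  have hFreal : ∀ x : ℝ, F (x : ℂ) = 0 := by
    intro x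
    have hx : (x : ℂ) ∈ {z : ℂ | 0 ≤ z.im} := by simp
    have hc := hFc (x : ℂ) hx
    set u : ℕ → ℂ := fun n => (x : ℂ) + ((1 / (n + 1) : ℝ) : ℂ) * Complex.I with hu
    have h0 : Tendsto (fun n : ℕ => (1 / (n + 1) : ℝ)) atTop (𝓝 0) :=
      tendsto_one_div_add_atTop_nhds_zero_nat
    have h1 : Tendsto (fun n : ℕ => ((1 / (n + 1) : ℝ) : ℂ)) atTop (𝓝 ((0 : ℝ) : ℂ)) :=
      (Complex.continuous_ofReal.tendsto _).comp h0
    have hulim : Tendsto u atTop (𝓝 (x : ℂ)) := by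
      have h2 : Tendsto u atTop (𝓝 ((x : ℂ) + ((0 : ℝ) : ℂ) * Complex.I)) :=
        tendsto_const_nhds.add (h1.mul_const _)
      simpa using h2
    have humem : ∀ n : ℕ, u n ∈ {z : ℂ | 0 < z.im} := by
      intro n
      simp only [hu, mem_setOf_eq, Complex.add_im, Complex.ofReal_im, Complex.mul_im,
        Complex.ofReal_re, Complex.I_im, Complex.I_re, Complex.ofReal_im]
      positivity
    have h1 : Tendsto (fun n => F (u n)) atTop (𝓝 (F (x : ℂ))) := by
      apply hc.tendsto.comp
      rw [tendsto_nhdsWithin_iff]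
      exact ⟨hulim, Eventually.of_forall fun n =>
        show (0:ℝ) ≤ (u n).im from le_of_lt (humem n)⟩
    have h2 : (fun n => F (u n)) = fun _ => (0 : ℂ) := by
      funext n; exact hF0 (humem n)
    rw [h2] at h1
    exact (tendsto_const_nhds_iff.1 h1).symm
  -- Fourier transform vanishes
  have h𝓕 : ∀ w : ℝ, 𝓕 f w = 0 := by
    intro w
    rw [Real.fourier_real_eq_integral_exp_smul]
    have := hFreal (-2 * π * w)
    rw [hFdef] at this
    rw [← this]
    congr 1; funext v
    rw [smul_eq_mul, mul_comm]
    congr 1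
    push_cast
    ring_nf
  exact fourier_inj hf h𝓕
end

section
/- Let h : ℝ²×ℝ → ℂ and φ : ℝ×ℝ² → ℂ be Schwartz functions, and let Q(t,ξ) = (t/(4π)) ∫_{S²} h((ξ,0)+tη) dS(η). Then both of the following integrals are absolutely convergent and equal: ∫₀^∞ ∫_{ℝ²} Q(t,ξ)·φ(t,ξ) dξ dt = ∫_{ℝ²×ℝ} h(x₁₂,x₃)·(R*φ)(x₁₂,x₃) dx₁₂ dx₃, where (R*φ)(x₁₂,x₃) = (1/(4π)) ∫_{ℝ²} φ(√(‖x₁₂−ξ‖² + x₃²), ξ) · (√(‖x₁₂−ξ‖² + x₃²))^{−1} dξ. -/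
open MeasureTheory Real Complex

/-- Embedding of `ℝ² × ℝ` into `ℝ³` (Euclidean). -/
noncomputable def emb (ξ : EuclideanSpace ℝ (Fin 2)) (r : ℝ) : EuclideanSpace ℝ (Fin 3) :=
  (EuclideanSpace.equiv (Fin 3) ℝ).symm ![ξ 0, ξ 1, r]

/-- Planar photoacoustic data `Q(t,ξ) = (t/(4π)) ∫_{S²} h((ξ,0)+tη) dS(η)`,
where `dS` is the surface measure on the unit sphere of `ℝ³`. -/
noncomputable def Q (h : EuclideanSpace ℝ (Fin 3) → ℂ) (t : ℝ)
    (ξ : EuclideanSpace ℝ (Fin 2)) : ℂ :=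
  ((t / (4 * π) : ℝ) : ℂ) * ∫ η : Metric.sphere (0 : EuclideanSpace ℝ (Fin 3)) 1,
    h (emb ξ 0 + t • (η : EuclideanSpace ℝ (Fin 3)))
    ∂((volume : Measure (EuclideanSpace ℝ (Fin 3))).toSphere)

/-- Backprojection operator:
`(R*φ)(x₁₂,x₃) = (1/(4π)) ∫_{ℝ²} φ(√(‖x₁₂−ξ‖² + x₃²), ξ)·(√(‖x₁₂−ξ‖² + x₃²))⁻¹ dξ`. -/
noncomputable def Rstar (g : ℝ × EuclideanSpace ℝ (Fin 2) → ℂ)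
    (x : EuclideanSpace ℝ (Fin 2) × ℝ) : ℂ :=
  ((1 / (4 * π) : ℝ) : ℂ) * ∫ ξ : EuclideanSpace ℝ (Fin 2),
    g (Real.sqrt (‖x.1 - ξ‖ ^ 2 + x.2 ^ 2), ξ) /
      ((Real.sqrt (‖x.1 - ξ‖ ^ 2 + x.2 ^ 2) : ℝ) : ℂ)

/-! ### Auxiliary material -/

open Set Metric Function
open scoped NNReal ENNReal

local notation "E2" => EuclideanSpace ℝ (Fin 2)
local notation "E3" => EuclideanSpace ℝ (Fin 3)

section emb_lemmas

lemma emb_apply (ξ : E2) (r : ℝ) (i : Fin 3) : emb ξ r i = ![ξ 0, ξ 1, r] i := rfl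

lemma emb_add (a b : E2) (r s : ℝ) : emb a r + emb b s = emb (a + b) (r + s) := by
  ext i
  fin_cases i <;> simp [emb_apply, PiLp.add_apply]

lemma norm_emb (ξ : E2) (r : ℝ) : ‖emb ξ r‖ = Real.sqrt (‖ξ‖ ^ 2 + r ^ 2) := by
  have h2 : ‖ξ‖ ^ 2 = ξ 0 ^ 2 + ξ 1 ^ 2 := by
    rw [EuclideanSpace.norm_eq, Real.sq_sqrt (by positivity)]
    simp [Fin.sum_univ_two, sq_abs]
  rw [EuclideanSpace.norm_eq, h2]
  congr 1
  simp [Fin.sum_univ_three, emb_apply, sq_abs]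

lemma continuous_emb : Continuous (fun p : E2 × ℝ => emb p.1 p.2) := by
  apply (EuclideanSpace.equiv (Fin 3) ℝ).symm.continuous.comp
  apply continuous_pi
  intro i
  fin_cases i <;> simp <;> fun_prop

set_option linter.unnecessarySeqFocus false in
lemma emb_mp : MeasurePreserving (fun p : E2 × ℝ => emb p.1 p.2) volume volume := by
  have e2 := EuclideanSpace.volume_preserving_symm_measurableEquiv_toLp (Fin 2)
  have e3 := (EuclideanSpace.volume_preserving_symm_measurableEquiv_toLp (Fin 3)).symm
  have epi := (MeasureTheory.volume_preserving_piFinSuccAbove (fun _ : Fin 3 => ℝ) 2).symm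
  have comp :
      (fun p : E2 × ℝ => emb p.1 p.2) =
        (MeasurableEquiv.toLp 2 (Fin 3 → ℝ)).symm.symm ∘
          (MeasurableEquiv.piFinSuccAbove (fun _ : Fin 3 => ℝ) 2).symm ∘
            (Prod.swap : ((Fin 2 → ℝ) × ℝ) → ℝ × (Fin 2 → ℝ)) ∘
              (fun p : E2 × ℝ => ((MeasurableEquiv.toLp 2 (Fin 2 → ℝ)).symm p.1, p.2)) := by
    funext p
    ext i
    fin_cases i <;>
      simp [emb, MeasurableEquiv.piFinSuccAbove, Fin.insertNthEquiv, Fin.insertNth,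
        Fin.succAboveCases, MeasurableEquiv.toLp, Fin.succAbove] <;>
      rfl
  rw [comp]
  exact ((e3.comp epi).comp (Measure.measurePreserving_swap)).comp
    (e2.prod (MeasurePreserving.id _))

end emb_lemmas

section polar

noncomputable def sphMeas : Measure (sphere (0 : E3) 1) := (volume : Measure E3).toSphere
noncomputable def radMeas : Measure (Ioi (0 : ℝ)) := Measure.volumeIoiPow 2

instance : IsFiniteMeasure sphMeas :=
  inferInstanceAs (IsFiniteMeasure (volume : Measure E3).toSphere)
instance : SigmaFinite radMeas := inferInstanceAs (SigmaFinite (Measure.volumeIoiPow 2))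

noncomputable def ψpol (p : sphere (0 : E3) 1 × Ioi (0 : ℝ)) : E3 := (p.2 : ℝ) • (p.1 : E3)

lemma ψpol_continuous : Continuous ψpol :=
  (continuous_subtype_val.comp continuous_snd).smul (continuous_subtype_val.comp continuous_fst)

lemma map_ψpol : Measure.map ψpol (sphMeas.prod radMeas) = (volume : Measure E3) := by
  have hmp := (volume : Measure E3).measurePreserving_homeomorphUnitSphereProd
  rw [show Module.finrank ℝ E3 - 1 = 2 by simp [finrank_euclideanSpace_fin]] at hmp
  set e : ({(0 : E3)}ᶜ : Set E3) ≃ᵐ (sphere (0 : E3) 1 × Ioi (0 : ℝ)) :=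
    (homeomorphUnitSphereProd E3).toMeasurableEquiv with he
  have hco : (⇑e) = ⇑(homeomorphUnitSphereProd E3) := Homeomorph.toMeasurableEquiv_coe _
  have hmp' : MeasurePreserving e ((volume : Measure E3).comap Subtype.val)
      (sphMeas.prod radMeas) := by
    unfold sphMeas radMeas; rw [hco]; exact hmp
  have hsymm := hmp'.symm e
  have hψ : ψpol = (Subtype.val : ({(0:E3)}ᶜ : Set E3) → E3) ∘ e.symm := by
    funext p
    have : e.symm p = (homeomorphUnitSphereProd E3).symm p := by
      rw [he]; rfl
    show ψpol p = (e.symm p : E3)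
    rw [this, homeomorphUnitSphereProd_symm_apply_coe]
    rfl
  rw [hψ, ← Measure.map_map measurable_subtype_coe e.symm.measurable, hsymm.map_eq,
    (MeasurableEmbedding.subtype_coe ((measurableSet_singleton (0:E3)).compl)).map_comap,
    Subtype.range_coe, restrict_compl_singleton]

variable {F : Type*} [NormedAddCommGroup F]

lemma polar_integrable_iff (f : E3 → F) (hf : AEStronglyMeasurable f volume) :
    Integrable f volume ↔ Integrable (f ∘ ψpol) (sphMeas.prod radMeas) := by
  rw [← map_ψpol] at hf ⊢
  exact integrable_map_measure hf ψpol_continuous.measurable.aemeasurable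

lemma polar_integral [NormedSpace ℝ F] (f : E3 → F) (hf : AEStronglyMeasurable f volume) :
    ∫ x, f x = ∫ p, f (ψpol p) ∂(sphMeas.prod radMeas) := by
  rw [← map_ψpol] at hf ⊢
  exact integral_map ψpol_continuous.measurable.aemeasurable hf

lemma radMeas_integrable_iff [NormedSpace ℝ F] (g : ℝ → F) :
    Integrable (fun t : Ioi (0:ℝ) => g t) radMeas ↔
      IntegrableOn (fun t : ℝ => t ^ 2 • g t) (Ioi (0:ℝ)) volume := by
  unfold radMeas Measure.volumeIoiPow
  have hd : ∀ r : Ioi (0:ℝ), ENNReal.ofReal ((r : ℝ) ^ 2)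
      = ((fun r : Ioi (0:ℝ) => ((r : ℝ) ^ 2).toNNReal) r : ℝ≥0∞) := fun r => rfl
  rw [show (fun r : Ioi (0:ℝ) => ENNReal.ofReal ((r:ℝ) ^ 2))
      = (fun r : Ioi (0:ℝ) => (((((r : ℝ) ^ 2).toNNReal) : ℝ≥0) : ℝ≥0∞)) from funext hd]
  rw [integrable_withDensity_iff_integrable_smul
    ((measurable_subtype_coe.pow_const 2).real_toNNReal)]
  have : (fun t : Ioi (0:ℝ) => (((t:ℝ)^2).toNNReal) • g t)
      = (fun t : ℝ => t ^ 2 • g t) ∘ (Subtype.val : Ioi (0:ℝ) → ℝ) := by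
    funext t
    show (((t:ℝ)^2).toNNReal) • g t = _
    rw [NNReal.smul_def, Real.coe_toNNReal _ (sq_nonneg (t:ℝ))]
    rfl
  rw [this, ← MeasurableEmbedding.integrable_map_iff
      (MeasurableEmbedding.subtype_coe measurableSet_Ioi),
    map_comap_subtype_coe measurableSet_Ioi]
  rfl

lemma radMeas_integral [NormedSpace ℝ F] [CompleteSpace F] (g : ℝ → F) :
    ∫ t : Ioi (0:ℝ), g t ∂radMeas = ∫ t in Ioi (0:ℝ), t ^ 2 • g t := by
  unfold radMeas Measure.volumeIoiPow
  have hd : (fun r : Ioi (0:ℝ) => ENNReal.ofReal ((r:ℝ) ^ 2))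
      = (fun r : Ioi (0:ℝ) => (((((r : ℝ) ^ 2).toNNReal) : ℝ≥0) : ℝ≥0∞)) := rfl
  rw [hd, integral_withDensity_eq_integral_smul
    ((measurable_subtype_coe.pow_const 2).real_toNNReal),
    integral_subtype_comap measurableSet_Ioi (fun t : ℝ => (t ^ 2).toNNReal • g t)]
  refine setIntegral_congr_fun measurableSet_Ioi (fun t ht => ?_)
  simp [NNReal.smul_def, Real.coe_toNNReal _ (sq_nonneg t)]

lemma integrableOn_t_one_add :
    IntegrableOn (fun t : ℝ => t ^ 2 • (t⁻¹ * (1 + t) ^ (-(3:ℝ)))) (Ioi (0:ℝ)) volume := by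
  have hbound : Integrable (fun t : ℝ => (1 + ‖t‖) ^ (-(2:ℝ))) (volume.restrict (Ioi 0)) := by
    apply Integrable.restrict
    apply integrable_one_add_norm (E := ℝ)
    simp
  apply Integrable.mono' hbound
  · apply Measurable.aestronglyMeasurable
    fun_prop
  · filter_upwards [ae_restrict_mem measurableSet_Ioi] with t ht
    have ht' : (0:ℝ) < t := ht
    have h1 : (0:ℝ) < 1 + t := by linarith
    rw [smul_eq_mul, Real.norm_eq_abs, Real.norm_eq_abs,
      show ((1+t):ℝ) ^ (-(3:ℝ)) = (((1+t):ℝ)^(3:ℕ))⁻¹ by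
        rw [← Real.rpow_natCast (1+t) 3, ← Real.rpow_neg h1.le]; norm_num,
      show ((1+|t|):ℝ) ^ (-(2:ℝ)) = (((1+|t|):ℝ)^(2:ℕ))⁻¹ by
        rw [← Real.rpow_natCast (1+|t|) 2, ← Real.rpow_neg (by positivity)]; norm_num,
      _root_.abs_of_nonneg (show (0:ℝ) ≤ t ^ 2 * (t⁻¹ * ((1 + t) ^ 3)⁻¹) by positivity)]
    rw [show t ^ 2 * (t⁻¹ * ((1+t)^3)⁻¹) = t * ((1+t)^3)⁻¹ by
      field_simp]
    rw [show (t : ℝ) * ((1+t)^3)⁻¹ = t / (1+t)^3 by ring,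
      show (((1+|t|)^2 : ℝ))⁻¹ = 1 / (1+|t|)^2 by ring, _root_.abs_of_pos ht',
      div_le_div_iff₀ (by positivity) (by positivity)]
    nlinarith [sq_nonneg (1+t), ht'.le]

lemma integrable_w :
    Integrable (fun x : E3 => ‖x‖⁻¹ * (1 + ‖x‖) ^ (-(3:ℝ))) (volume : Measure E3) := by
  have hmeas : AEStronglyMeasurable (fun x : E3 => ‖x‖⁻¹ * (1 + ‖x‖) ^ (-(3:ℝ))) volume := by
    apply Measurable.aestronglyMeasurable; fun_prop
  rw [polar_integrable_iff _ hmeas]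
  have hW : Integrable (fun t : Ioi (0:ℝ) => (t:ℝ)⁻¹ * (1 + (t:ℝ)) ^ (-(3:ℝ))) radMeas := by
    rw [radMeas_integrable_iff (fun t : ℝ => t⁻¹ * (1 + t) ^ (-(3:ℝ)))]
    exact integrableOn_t_one_add
  have := (integrable_const (1:ℝ) (μ := sphMeas)).mul_prod hW
  apply this.congr
  apply Filter.Eventually.of_forall
  intro p
  have hη : ‖(p.1 : E3)‖ = 1 := mem_sphere_zero_iff_norm.mp p.1.2
  have htp : (0:ℝ) < (p.2 : ℝ) := p.2.2
  show (1:ℝ) * ((p.2:ℝ)⁻¹ * (1 + (p.2:ℝ)) ^ (-(3:ℝ))) = ‖ψpol p‖⁻¹ * (1 + ‖ψpol p‖) ^ (-(3:ℝ))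
  rw [show ‖ψpol p‖ = (p.2 : ℝ) by
    rw [show ψpol p = (p.2 : ℝ) • (p.1 : E3) from rfl, norm_smul, hη, Real.norm_eq_abs,
      _root_.abs_of_pos htp, mul_one]]
  ring

end polar

section schwartz_bounds

lemma schwartz_decay_prod (φ : SchwartzMap (ℝ × E2) ℂ) :
    ∃ C : ℝ, 0 ≤ C ∧ ∀ t : ℝ, ∀ ξ : E2,
      ‖φ (t, ξ)‖ ≤ C * (1 + |t|) ^ (-(3:ℝ)) * (1 + ‖ξ‖) ^ (-(3:ℝ)) := by
  set C : ℝ := 2 ^ 6 * (Finset.Iic ((6,0) : ℕ × ℕ)).sup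
    (fun m => SchwartzMap.seminorm ℝ m.1 m.2) φ with hC
  have hC0 : 0 ≤ C := by positivity
  refine ⟨C, hC0, fun t ξ => ?_⟩
  have key := SchwartzMap.one_add_le_sup_seminorm_apply (𝕜 := ℝ) (m := ((6,0) : ℕ × ℕ))
    le_rfl le_rfl φ (t, ξ)
  rw [norm_iteratedFDeriv_zero] at key
  have hb : (1 + |t|) ^ (3:ℕ) * (1 + ‖ξ‖) ^ (3:ℕ) ≤ (1 + ‖(t, ξ)‖) ^ (6:ℕ) := by
    have h1 : 1 + |t| ≤ 1 + ‖(t, ξ)‖ := by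
      have := norm_fst_le (t, ξ); simp only [Real.norm_eq_abs] at this; linarith
    have h2 : 1 + ‖ξ‖ ≤ 1 + ‖(t, ξ)‖ := by
      have := norm_snd_le (t, ξ); linarith
    calc (1 + |t|) ^ (3:ℕ) * (1 + ‖ξ‖) ^ (3:ℕ)
        ≤ (1 + ‖(t, ξ)‖) ^ (3:ℕ) * (1 + ‖(t, ξ)‖) ^ (3:ℕ) := by
          apply mul_le_mul <;> first | positivity | gcongr <;> positivity
      _ = (1 + ‖(t, ξ)‖) ^ (6:ℕ) := by ring
  have ht1 : (0:ℝ) < 1 + |t| := by positivity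
  have hξ1 : (0:ℝ) < 1 + ‖ξ‖ := by positivity
  have hrw : ∀ a : ℝ, 0 < a → a ^ (-(3:ℝ)) = ((a ^ (3:ℕ)) : ℝ)⁻¹ := by
    intro a ha
    rw [Real.rpow_neg ha.le, ← Real.rpow_natCast a 3]
    norm_num
  rw [hrw _ ht1, hrw _ hξ1]
  rw [mul_assoc, mul_comm ((1+|t|)^(3:ℕ) : ℝ)⁻¹, ← mul_inv]
  rw [show C * ((1 + ‖ξ‖) ^ (3:ℕ) * (1 + |t|) ^ (3:ℕ))⁻¹
      = C / ((1 + |t|) ^ (3:ℕ) * (1 + ‖ξ‖) ^ (3:ℕ)) by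
        rw [div_eq_mul_inv, mul_comm ((1+|t|)^(3:ℕ))],
    le_div_iff₀ (by positivity)]
  calc ‖φ (t, ξ)‖ * ((1 + |t|) ^ (3:ℕ) * (1 + ‖ξ‖) ^ (3:ℕ))
      ≤ ‖φ (t, ξ)‖ * (1 + ‖(t, ξ)‖) ^ (6:ℕ) := by
        apply mul_le_mul_of_nonneg_left hb (norm_nonneg _)
    _ ≤ C := by rw [mul_comm]; exact key

lemma schwartz_norm_bound {E : Type*} [NormedAddCommGroup E] [NormedSpace ℝ E]
    (h : SchwartzMap E ℂ) : ∃ M : ℝ, 0 ≤ M ∧ ∀ x, ‖h x‖ ≤ M := by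
  obtain ⟨M, hM0, hM⟩ := h.decay 0 0
  refine ⟨max M 0, le_max_right _ _, fun x => ?_⟩
  have := hM x
  rw [pow_zero, one_mul, norm_iteratedFDeriv_zero] at this
  exact this.trans (le_max_left _ _)

end schwartz_bounds

set_option maxHeartbeats 1000000

section master

variable (h : SchwartzMap (EuclideanSpace ℝ (Fin 3)) ℂ)
  (φ : SchwartzMap (ℝ × EuclideanSpace ℝ (Fin 2)) ℂ)

/-- The master integrand. -/
noncomputable def GG (ξ : E2) (x : E3) : ℂ :=
  h (emb ξ 0 + x) * (φ (‖x‖, ξ) * ((((4 * π * ‖x‖)⁻¹ : ℝ)) : ℂ))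

lemma GG_meas : Measurable (fun z : E2 × E3 => GG h φ z.1 z.2) := by
  have c1 : Continuous fun z : E2 × E3 => h (emb z.1 0 + z.2) :=
    h.continuous.comp ((continuous_emb.comp (continuous_fst.prodMk continuous_const)).add
      continuous_snd)
  have c2 : Continuous fun z : E2 × E3 => φ (‖z.2‖, z.1) :=
    φ.continuous.comp ((continuous_norm.comp continuous_snd).prodMk continuous_fst)
  have m3 : Measurable fun z : E2 × E3 => ((((4 * π * ‖z.2‖)⁻¹ : ℝ)) : ℂ) :=
    Complex.measurable_ofReal.comp ((measurable_const.mul (measurable_norm.comp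
      measurable_snd)).inv)
  exact c1.measurable.mul (c2.measurable.mul m3)

lemma GG_meas_one (ξ : E2) : Measurable (GG h φ ξ) := by
  have c1 : Continuous fun x : E3 => h (emb ξ 0 + x) :=
    h.continuous.comp (continuous_const.add continuous_id)
  have c2 : Continuous fun x : E3 => φ (‖x‖, ξ) :=
    φ.continuous.comp (continuous_norm.prodMk continuous_const)
  have m3 : Measurable fun x : E3 => ((((4 * π * ‖x‖)⁻¹ : ℝ)) : ℂ) :=
    Complex.measurable_ofReal.comp ((measurable_const.mul measurable_norm).inv)
  show Measurable fun x : E3 => h (emb ξ 0 + x) * (φ (‖x‖, ξ) * ((((4 * π * ‖x‖)⁻¹ : ℝ)) : ℂ))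
  exact c1.measurable.mul (c2.measurable.mul m3)

lemma GG_norm_le {M C : ℝ} (hMb : ∀ x, ‖h x‖ ≤ M)
    (hCb : ∀ t : ℝ, ∀ ξ : E2, ‖φ (t, ξ)‖ ≤ C * (1+|t|)^(-(3:ℝ)) * (1+‖ξ‖)^(-(3:ℝ)))
    (ξ : E2) (x : E3) :
    ‖GG h φ ξ x‖ ≤ (M * C * (4*π)⁻¹ * ((1+‖ξ‖)^(-(3:ℝ))))
      * (‖x‖⁻¹ * (1+‖x‖)^(-(3:ℝ))) := by
  have hM0 : 0 ≤ M := (norm_nonneg _).trans (hMb 0)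
  have hφ' : ‖φ (‖x‖, ξ)‖ ≤ C * (1+‖x‖)^(-(3:ℝ)) * (1+‖ξ‖)^(-(3:ℝ)) := by
    have := hCb ‖x‖ ξ
    rwa [_root_.abs_of_nonneg (norm_nonneg x)] at this
  have hC0 : 0 ≤ C * (1+‖x‖)^(-(3:ℝ)) * (1+‖ξ‖)^(-(3:ℝ)) := (norm_nonneg _).trans hφ'
  unfold GG
  rw [norm_mul, norm_mul, Complex.norm_real, Real.norm_eq_abs,
    _root_.abs_of_nonneg (show (0:ℝ) ≤ (4*π*‖x‖)⁻¹ by positivity), mul_inv]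
  calc ‖h (emb ξ 0 + x)‖ * (‖φ (‖x‖, ξ)‖ * ((4*π)⁻¹ * ‖x‖⁻¹))
      ≤ M * ((C * (1+‖x‖)^(-(3:ℝ)) * (1+‖ξ‖)^(-(3:ℝ))) * ((4*π)⁻¹ * ‖x‖⁻¹)) := by
        apply mul_le_mul (hMb _) _ (by positivity) hM0
        apply mul_le_mul_of_nonneg_right hφ' (by positivity)
    _ = (M * C * (4*π)⁻¹ * ((1+‖ξ‖)^(-(3:ℝ)))) * (‖x‖⁻¹ * (1+‖x‖)^(-(3:ℝ))) := by ring

lemma GG_integrable_master {M C : ℝ} (hMb : ∀ x, ‖h x‖ ≤ M)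
    (hCb : ∀ t : ℝ, ∀ ξ : E2, ‖φ (t, ξ)‖ ≤ C * (1+|t|)^(-(3:ℝ)) * (1+‖ξ‖)^(-(3:ℝ))) :
    Integrable (fun z : E2 × E3 => GG h φ z.1 z.2)
      ((volume : Measure E2).prod (volume : Measure E3)) := by
  have hdim : ((Module.finrank ℝ E2 : ℝ)) < 3 := by
    simp only [finrank_euclideanSpace_fin]
    norm_num
  have hb1 : Integrable (fun ξ : E2 => M * C * (4*π)⁻¹ * (1+‖ξ‖)^(-(3:ℝ))) volume :=
    (integrable_one_add_norm hdim).const_mul _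
  refine Integrable.mono' (hb1.mul_prod integrable_w) (GG_meas h φ).aestronglyMeasurable ?_
  exact Filter.Eventually.of_forall fun z => GG_norm_le h φ hMb hCb z.1 z.2

lemma GG_integrable {M C : ℝ} (hMb : ∀ x, ‖h x‖ ≤ M)
    (hCb : ∀ t : ℝ, ∀ ξ : E2, ‖φ (t, ξ)‖ ≤ C * (1+|t|)^(-(3:ℝ)) * (1+‖ξ‖)^(-(3:ℝ)))
    (ξ : E2) : Integrable (GG h φ ξ) (volume : Measure E3) := by
  have hmeas : Measurable (GG h φ ξ) := GG_meas_one h φ ξ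
  apply Integrable.mono'
    (integrable_w.const_mul (M * C * (4*π)⁻¹ * ((1+‖ξ‖)^(-(3:ℝ)))))
    hmeas.aestronglyMeasurable
  apply Filter.Eventually.of_forall
  intro x
  have := GG_norm_le h φ hMb hCb ξ x
  calc ‖GG h φ ξ x‖ ≤ _ := this
    _ = M * C * (4*π)⁻¹ * (1+‖ξ‖)^(-(3:ℝ)) * (‖x‖⁻¹ * (1+‖x‖)^(-(3:ℝ))) := by ring

lemma GG_polar_eq {M C : ℝ} (hMb : ∀ x, ‖h x‖ ≤ M)
    (hCb : ∀ t : ℝ, ∀ ξ : E2, ‖φ (t, ξ)‖ ≤ C * (1+|t|)^(-(3:ℝ)) * (1+‖ξ‖)^(-(3:ℝ)))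
    (ξ : E2) :
    ∫ x, GG h φ ξ x = ∫ t in Ioi (0:ℝ), t ^ 2 •
      ∫ η : sphere (0:E3) 1, GG h φ ξ (t • (η : E3)) ∂sphMeas := by
  have hmeas : AEStronglyMeasurable (GG h φ ξ) (volume : Measure E3) :=
    (GG_meas_one h φ ξ).aestronglyMeasurable
  have hint := GG_integrable h φ hMb hCb ξ
  have hintp : Integrable ((GG h φ ξ) ∘ ψpol) (sphMeas.prod radMeas) :=
    (polar_integrable_iff _ hmeas).1 hint
  rw [polar_integral _ hmeas,
    show (∫ p, GG h φ ξ (ψpol p) ∂(sphMeas.prod radMeas))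
      = ∫ z, (GG h φ ξ ∘ ψpol) z ∂(sphMeas.prod radMeas) from rfl,
    integral_prod_symm _ hintp,
    ← radMeas_integral (fun t : ℝ => ∫ η : sphere (0:E3) 1, GG h φ ξ (t • (η : E3)) ∂sphMeas)]
  rfl

lemma Q_mul_eq (ξ : E2) {t : ℝ} (ht : 0 < t) :
    Q (⇑h) t ξ * φ (t, ξ) =
      t ^ 2 • ∫ η : sphere (0:E3) 1, GG h φ ξ (t • (η : E3)) ∂sphMeas := by
  have hsub : ∀ η : sphere (0:E3) 1, GG h φ ξ (t • (η : E3))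
      = h (emb ξ 0 + t • (η : E3)) * (φ (t, ξ) * (((4*π*t)⁻¹ : ℝ) : ℂ)) := by
    intro η
    unfold GG
    rw [show ‖t • (η : E3)‖ = t by
      rw [norm_smul, mem_sphere_zero_iff_norm.mp η.2, mul_one, Real.norm_eq_abs,
        _root_.abs_of_pos ht]]
  simp only [hsub]
  rw [MeasureTheory.integral_mul_const]
  show ((t / (4 * π) : ℝ) : ℂ) * (∫ η : sphere (0:E3) 1,
      h (emb ξ 0 + t • (η : E3)) ∂sphMeas) * φ (t, ξ)
    = t ^ 2 • ((∫ η : sphere (0:E3) 1, h (emb ξ 0 + t • (η : E3)) ∂sphMeas)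
      * (φ (t, ξ) * (((4*π*t)⁻¹ : ℝ) : ℂ)))
  set I := ∫ η : sphere (0:E3) 1, h (emb ξ 0 + t • (η : E3)) ∂sphMeas
  rw [show (t:ℝ) ^ 2 • (I * (φ (t, ξ) * (((4*π*t)⁻¹ : ℝ) : ℂ)))
      = (((t^2 : ℝ)) : ℂ) * (I * (φ (t, ξ) * (((4*π*t)⁻¹ : ℝ) : ℂ))) from
    Complex.real_smul]
  push_cast
  have hπ : ((π:ℝ):ℂ) ≠ 0 := by
    simp [Complex.ofReal_ne_zero, Real.pi_ne_zero]
  have ht0 : ((t:ℝ):ℂ) ≠ 0 := by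
    simp [Complex.ofReal_ne_zero, ht.ne']
  field_simp

end master

section assembly

variable (h : SchwartzMap (EuclideanSpace ℝ (Fin 3)) ℂ)
  (φ : SchwartzMap (ℝ × EuclideanSpace ℝ (Fin 2)) ℂ)

lemma Q_continuous : Continuous (fun p : ℝ × E2 => Q (⇑h) p.1 p.2) := by
  obtain ⟨M, hM0, hMb⟩ := schwartz_norm_bound h
  unfold Q
  apply Continuous.mul
  · exact Complex.continuous_ofReal.comp (continuous_fst.div_const _)
  · apply continuous_of_dominated (bound := fun _ => M)
    · intro x
      apply Continuous.aestronglyMeasurable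
      exact h.continuous.comp (continuous_const.add
        (continuous_const.fun_smul continuous_subtype_val))
    · intro x
      exact Filter.Eventually.of_forall fun η => hMb _
    · exact integrable_const M
    · apply Filter.Eventually.of_forall
      intro η
      exact h.continuous.comp ((continuous_emb.comp
        (continuous_snd.prodMk continuous_const)).add (continuous_fst.smul continuous_const))

lemma abs_mul_rpow_le (t : ℝ) : |t| * (1+|t|)^(-(3:ℝ)) ≤ (1+|t|)^(-(2:ℝ)) := by
  have h1 : (0:ℝ) < 1 + |t| := by positivity
  rw [show ((1+|t|):ℝ) ^ (-(3:ℝ)) = (((1+|t|):ℝ)^(3:ℕ))⁻¹ by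
      rw [← Real.rpow_natCast (1+|t|) 3, ← Real.rpow_neg h1.le]; norm_num,
    show ((1+|t|):ℝ) ^ (-(2:ℝ)) = (((1+|t|):ℝ)^(2:ℕ))⁻¹ by
      rw [← Real.rpow_natCast (1+|t|) 2, ← Real.rpow_neg h1.le]; norm_num,
    show |t| * (((1+|t|):ℝ)^(3:ℕ))⁻¹ = |t| / ((1+|t|):ℝ)^(3:ℕ) by ring,
    show ((((1+|t|):ℝ)^(2:ℕ))⁻¹ : ℝ) = 1 / ((1+|t|):ℝ)^(2:ℕ) by ring,
    div_le_div_iff₀ (by positivity) (by positivity)]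
  nlinarith [abs_nonneg t, sq_nonneg (1+|t|)]

lemma LHS_integrableOn :
    IntegrableOn (fun p : ℝ × E2 => Q (⇑h) p.1 p.2 * φ p)
      (Ioi (0:ℝ) ×ˢ (univ : Set E2)) := by
  obtain ⟨M, hM0, hMb⟩ := schwartz_norm_bound h
  obtain ⟨C, hC0, hCb⟩ := schwartz_decay_prod φ
  set S := (((volume : Measure E3).toSphere) univ).toReal with hS
  have hS0 : 0 ≤ S := ENNReal.toReal_nonneg
  rw [IntegrableOn, Measure.volume_eq_prod, ← Measure.prod_restrict, Measure.restrict_univ]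
  have h1d : ((Module.finrank ℝ ℝ : ℝ)) < 2 := by simp
  have hb1 : Integrable (fun t : ℝ => (M*S*(4*π)⁻¹*C) * (1+‖t‖)^(-(2:ℝ)))
      (volume.restrict (Ioi 0)) := ((integrable_one_add_norm h1d).restrict).const_mul _
  have hb2 : Integrable (fun ξ : E2 => (1+‖ξ‖)^(-(3:ℝ))) (volume : Measure E2) := by
    apply integrable_one_add_norm
    simp only [finrank_euclideanSpace_fin]; norm_num
  refine Integrable.mono' (hb1.mul_prod hb2)
    (((Q_continuous h).mul φ.continuous).aestronglyMeasurable) ?_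
  apply Filter.Eventually.of_forall
  rintro ⟨t, ξ⟩
  have hQ : ‖Q (⇑h) t ξ‖ ≤ |t| * (4*π)⁻¹ * (M * S) := by
    unfold Q
    rw [norm_mul, Complex.norm_real, Real.norm_eq_abs, abs_div,
      _root_.abs_of_pos (show (0:ℝ) < 4*π by positivity)]
    have hI : ‖∫ η : Metric.sphere (0:E3) 1, h (emb ξ 0 + t • (η : E3))
        ∂((volume : Measure E3).toSphere)‖ ≤ M * S :=
      norm_integral_le_of_norm_le_const (Filter.Eventually.of_forall fun η => hMb _)
    calc |t| / (4*π) * ‖∫ η : Metric.sphere (0:E3) 1, h (emb ξ 0 + t • (η : E3))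
          ∂((volume : Measure E3).toSphere)‖
        ≤ |t| / (4*π) * (M * S) := by
          apply mul_le_mul_of_nonneg_left hI (by positivity)
      _ = |t| * (4*π)⁻¹ * (M * S) := by ring
  have hφb := hCb t ξ
  calc ‖Q (⇑h) t ξ * φ (t, ξ)‖ = ‖Q (⇑h) t ξ‖ * ‖φ (t, ξ)‖ := norm_mul _ _
    _ ≤ (|t| * (4*π)⁻¹ * (M * S)) * (C * (1+|t|)^(-(3:ℝ)) * (1+‖ξ‖)^(-(3:ℝ))) := by
        apply mul_le_mul hQ hφb (norm_nonneg _) (by positivity)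
    _ = (M*S*(4*π)⁻¹*C) * (|t| * (1+|t|)^(-(3:ℝ))) * (1+‖ξ‖)^(-(3:ℝ)) := by ring
    _ ≤ (M*S*(4*π)⁻¹*C) * ((1+|t|)^(-(2:ℝ))) * (1+‖ξ‖)^(-(3:ℝ)) := by
        apply mul_le_mul_of_nonneg_right _ (by positivity)
        apply mul_le_mul_of_nonneg_left (abs_mul_rpow_le t) (by positivity)
    _ = (M*S*(4*π)⁻¹*C) * (1+‖t‖)^(-(2:ℝ)) * (1+‖ξ‖)^(-(3:ℝ)) := by
        rw [Real.norm_eq_abs]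
    _ = (fun a : ℝ => (M*S*(4*π)⁻¹*C) * (1+‖a‖)^(-(2:ℝ))) t * (1+‖ξ‖)^(-(3:ℝ)) := by ring

lemma LHS_eq :
    (∫ t in Ioi (0:ℝ), ∫ ξ : E2, Q (⇑h) t ξ * φ (t, ξ))
      = ∫ ξ : E2, ∫ x : E3, GG h φ ξ x := by
  obtain ⟨M, hM0, hMb⟩ := schwartz_norm_bound h
  obtain ⟨C, hC0, hCb⟩ := schwartz_decay_prod φ
  have hint : Integrable (uncurry fun t ξ => Q (⇑h) t ξ * φ (t, ξ))
      ((volume.restrict (Ioi (0:ℝ))).prod (volume : Measure E2)) := by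
    have := LHS_integrableOn h φ
    rw [IntegrableOn, Measure.volume_eq_prod, ← Measure.prod_restrict,
      Measure.restrict_univ] at this
    exact this
  rw [integral_integral_swap hint]
  apply integral_congr_ae
  apply Filter.Eventually.of_forall
  intro ξ
  show (∫ t in Ioi (0:ℝ), Q (⇑h) t ξ * φ (t, ξ)) = ∫ x : E3, GG h φ ξ x
  rw [setIntegral_congr_fun measurableSet_Ioi
      (fun t (ht : t ∈ Ioi (0:ℝ)) => Q_mul_eq h φ ξ ht),
    ← GG_polar_eq h φ hMb hCb ξ]

lemma T'_mp : MeasurePreserving (fun q : E2 × (E2 × ℝ) => (q.1, emb (q.2.1 - q.1) q.2.2))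
    ((volume : Measure E2).prod (volume : Measure (E2 × ℝ)))
    ((volume : Measure E2).prod (volume : Measure E3)) := by
  apply MeasurePreserving.skew_product (g := fun ξ (p : E2 × ℝ) => emb (p.1 - ξ) p.2)
    (MeasurePreserving.id _)
  · exact (continuous_emb.comp
      (((continuous_fst.comp continuous_snd).sub continuous_fst).prodMk
        (continuous_snd.comp continuous_snd))).measurable
  · apply Filter.Eventually.of_forall
    intro ξ
    have mp2 : MeasurePreserving (Prod.map (fun y : E2 => y - ξ) (id : ℝ → ℝ))
        ((volume : Measure E2).prod (volume : Measure ℝ))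
        ((volume : Measure E2).prod (volume : Measure ℝ)) :=
      (measurePreserving_sub_right volume ξ).prod (MeasurePreserving.id _)
    have : MeasurePreserving (fun p : E2 × ℝ => emb (p.1 - ξ) p.2)
        (volume : Measure (E2 × ℝ)) (volume : Measure E3) := by
      have hcomp : (fun p : E2 × ℝ => emb (p.1 - ξ) p.2)
          = (fun p : E2 × ℝ => emb p.1 p.2) ∘ (Prod.map (fun y : E2 => y - ξ) (id : ℝ → ℝ)) :=
        rfl
      rw [hcomp]
      exact emb_mp.comp mp2
    exact this.map_eq

lemma G2_integrable :
    Integrable (fun z : (E2 × ℝ) × E2 => GG h φ z.2 (emb (z.1.1 - z.2) z.1.2))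
      ((volume : Measure (E2 × ℝ)).prod (volume : Measure E2)) := by
  obtain ⟨M, hM0, hMb⟩ := schwartz_norm_bound h
  obtain ⟨C, hC0, hCb⟩ := schwartz_decay_prod φ
  have hGGi := GG_integrable_master h φ hMb hCb
  have hcomp : Integrable ((fun z : E2 × E3 => GG h φ z.1 z.2)
      ∘ (fun q : E2 × (E2 × ℝ) => (q.1, emb (q.2.1 - q.1) q.2.2)))
      ((volume : Measure E2).prod (volume : Measure (E2 × ℝ))) :=
    ((T'_mp).integrable_comp (GG_meas h φ).aestronglyMeasurable).2 hGGi
  exact hcomp.swap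

lemma Rstar_repr (p : E2 × ℝ) :
    h (emb p.1 p.2) * Rstar (⇑φ) p = ∫ ξ : E2, GG h φ ξ (emb (p.1 - ξ) p.2) := by
  have hn : ∀ ξ : E2, Real.sqrt (‖p.1 - ξ‖ ^ 2 + p.2 ^ 2) = ‖emb (p.1 - ξ) p.2‖ :=
    fun ξ => (norm_emb _ _).symm
  have hrw : ∀ ξ : E2,
      h (emb ξ 0 + emb (p.1 - ξ) p.2) * (φ (‖emb (p.1 - ξ) p.2‖, ξ) *
        ((((4 * π * ‖emb (p.1 - ξ) p.2‖)⁻¹ : ℝ)) : ℂ))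
      = h (emb p.1 p.2) * (((1 / (4 * π) : ℝ) : ℂ) *
          (φ (‖emb (p.1 - ξ) p.2‖, ξ) / ((‖emb (p.1 - ξ) p.2‖ : ℝ) : ℂ))) := by
    intro ξ
    rw [emb_add, show ξ + (p.1 - ξ) = p.1 by abel, zero_add]
    congr 1
    push_cast
    rw [mul_inv]
    ring
  unfold Rstar GG
  simp only [hn, hrw]
  rw [MeasureTheory.integral_const_mul, MeasureTheory.integral_const_mul]

lemma RHS_integrable :
    Integrable (fun x : E2 × ℝ => h (emb x.1 x.2) * Rstar (⇑φ) x) := by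
  have hfun : (fun x : E2 × ℝ => h (emb x.1 x.2) * Rstar (⇑φ) x)
      = fun p : E2 × ℝ => ∫ ξ : E2, GG h φ ξ (emb (p.1 - ξ) p.2) :=
    funext (Rstar_repr h φ)
  rw [hfun]
  exact (G2_integrable h φ).integral_prod_left

lemma RHS_eq :
    ∫ x : E2 × ℝ, h (emb x.1 x.2) * Rstar (⇑φ) x = ∫ ξ : E2, ∫ x : E3, GG h φ ξ x := by
  obtain ⟨M, hM0, hMb⟩ := schwartz_norm_bound h
  obtain ⟨C, hC0, hCb⟩ := schwartz_decay_prod φ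
  have hfun : (fun x : E2 × ℝ => h (emb x.1 x.2) * Rstar (⇑φ) x)
      = fun p : E2 × ℝ => ∫ ξ : E2, GG h φ ξ (emb (p.1 - ξ) p.2) :=
    funext (Rstar_repr h φ)
  rw [hfun, ← MeasureTheory.integral_prod _ (G2_integrable h φ)]
  have hswap : ∫ z : (E2 × ℝ) × E2, GG h φ z.2 (emb (z.1.1 - z.2) z.1.2)
        ∂((volume : Measure (E2 × ℝ)).prod (volume : Measure E2))
      = ∫ q : E2 × (E2 × ℝ), GG h φ q.1 (emb (q.2.1 - q.1) q.2.2)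
        ∂((volume : Measure E2).prod (volume : Measure (E2 × ℝ))) := by
    exact MeasureTheory.integral_prod_swap
      (fun q : E2 × (E2 × ℝ) => GG h φ q.1 (emb (q.2.1 - q.1) q.2.2))
  rw [hswap]
  have hmapped : ∫ q : E2 × (E2 × ℝ), GG h φ q.1 (emb (q.2.1 - q.1) q.2.2)
        ∂((volume : Measure E2).prod (volume : Measure (E2 × ℝ)))
      = ∫ z : E2 × E3, GG h φ z.1 z.2
        ∂((volume : Measure E2).prod (volume : Measure E3)) := by
    rw [← T'_mp.map_eq, integral_map T'_mp.measurable.aemeasurable]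
    rw [T'_mp.map_eq]
    exact (GG_meas h φ).aestronglyMeasurable
  rw [hmapped, MeasureTheory.integral_prod _ (GG_integrable_master h φ hMb hCb)]

end assembly

theorem stmt7 (h : SchwartzMap (EuclideanSpace ℝ (Fin 3)) ℂ)
    (φ : SchwartzMap (ℝ × EuclideanSpace ℝ (Fin 2)) ℂ) :
    IntegrableOn (fun p : ℝ × EuclideanSpace ℝ (Fin 2) => Q (⇑h) p.1 p.2 * φ p)
        (Set.Ioi (0 : ℝ) ×ˢ (Set.univ : Set (EuclideanSpace ℝ (Fin 2)))) ∧
    Integrable (fun x : EuclideanSpace ℝ (Fin 2) × ℝ =>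
        h (emb x.1 x.2) * Rstar (⇑φ) x) ∧
    (∫ t in Set.Ioi (0 : ℝ), ∫ ξ : EuclideanSpace ℝ (Fin 2), Q (⇑h) t ξ * φ (t, ξ))
      = ∫ x : EuclideanSpace ℝ (Fin 2) × ℝ, h (emb x.1 x.2) * Rstar (⇑φ) x := by
  exact ⟨LHS_integrableOn h φ, RHS_integrable h φ, (LHS_eq h φ).trans (RHS_eq h φ).symm⟩
end

section
/- There exists a continuous linear map E₁ from the Schwartz space 𝒮(ℝ×ℝ², ℂ) to itself such that for every ψ ∈ 𝒮(ℝ×ℝ², ℂ) and every (ω,σ) ∈ ℝ×ℝ², (E₁ψ)(ω,σ) = 8πi · ψ(ω² − ‖σ‖², σ); moreover (E₁ψ)(−ω,σ) = (E₁ψ)(ω,σ) for all (ω,σ). -/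
open Real

lemma htg_add {E F : Type*} [NormedAddCommGroup E] [NormedSpace ℝ E]
    [NormedAddCommGroup F] [NormedSpace ℝ F] {f g : E → F}
    (hf : Function.HasTemperateGrowth f) (hg : Function.HasTemperateGrowth g) :
    Function.HasTemperateGrowth (f + g) := by
  refine ⟨hf.1.add hg.1, fun n => ?_⟩
  obtain ⟨k₁, C₁, h₁⟩ := hf.2 n
  obtain ⟨k₂, C₂, h₂⟩ := hg.2 n
  refine ⟨max k₁ k₂, max C₁ 0 + max C₂ 0, fun x => ?_⟩
  have hx : (1:ℝ) ≤ 1 + ‖x‖ := by simp [norm_nonneg]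
  have e : iteratedFDeriv ℝ n (f + g) x = iteratedFDeriv ℝ n f x + iteratedFDeriv ℝ n g x :=
    iteratedFDeriv_add_apply (hf.1.contDiffAt.of_le (by exact_mod_cast le_top))
      (hg.1.contDiffAt.of_le (by exact_mod_cast le_top))
  have b₁ : C₁ * (1 + ‖x‖) ^ k₁ ≤ max C₁ 0 * (1 + ‖x‖) ^ max k₁ k₂ :=
    mul_le_mul (le_max_left _ _) (pow_le_pow_right₀ hx (le_max_left _ _)) (by positivity)
      (le_max_right _ _)
  have b₂ : C₂ * (1 + ‖x‖) ^ k₂ ≤ max C₂ 0 * (1 + ‖x‖) ^ max k₁ k₂ :=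
    mul_le_mul (le_max_left _ _) (pow_le_pow_right₀ hx (le_max_right _ _)) (by positivity)
      (le_max_right _ _)
  calc ‖iteratedFDeriv ℝ n (f + g) x‖
      ≤ ‖iteratedFDeriv ℝ n f x‖ + ‖iteratedFDeriv ℝ n g x‖ := by rw [e]; exact norm_add_le _ _
    _ ≤ C₁ * (1 + ‖x‖) ^ k₁ + C₂ * (1 + ‖x‖) ^ k₂ := add_le_add (h₁ x) (h₂ x)
    _ ≤ max C₁ 0 * (1 + ‖x‖) ^ max k₁ k₂ + max C₂ 0 * (1 + ‖x‖) ^ max k₁ k₂ := add_le_add b₁ b₂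
    _ = (max C₁ 0 + max C₂ 0) * (1 + ‖x‖) ^ max k₁ k₂ := by ring

lemma htg_quad {E F : Type*} [NormedAddCommGroup E] [NormedSpace ℝ E]
    [NormedAddCommGroup F] [NormedSpace ℝ F] (B : E →L[ℝ] E →L[ℝ] F) :
    Function.HasTemperateGrowth (fun x => B x x) := by
  have hderiv : ∀ x : E, HasFDerivAt (fun x => B x x) ((B + B.flip) x) x := by
    intro x
    have hd : HasFDerivAt (fun y : E => (y, y))
        ((ContinuousLinearMap.id ℝ E).prod (ContinuousLinearMap.id ℝ E)) x :=
      (hasFDerivAt_id x).prodMk (hasFDerivAt_id x)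
    have h := HasFDerivAt.comp (x := x) (f := fun y : E => (y, y)) (g := fun p : E × E => B p.1 p.2)
      (B.isBoundedBilinearMap.hasFDerivAt (x, x)) hd
    convert h using 1
    · rfl
    · ext y
      simp [IsBoundedBilinearMap.deriv_apply]
  have hfd : fderiv ℝ (fun x => B x x) = fun x => (B + B.flip) x := by
    ext1 x
    exact (hderiv x).fderiv
  refine Function.HasTemperateGrowth.of_fderiv ?_ (fun x => (hderiv x).differentiableAt)
    (k := 2) (C := ‖B‖) (fun x => ?_)
  · rw [hfd]; exact (B + B.flip).hasTemperateGrowth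
  · have h1 : ‖B x x‖ ≤ ‖B‖ * ‖x‖ * ‖x‖ := B.le_opNorm₂ x x
    have h2 : ‖x‖ * ‖x‖ ≤ (1 + ‖x‖) ^ 2 := by nlinarith [norm_nonneg x]
    calc ‖B x x‖ ≤ ‖B‖ * (‖x‖ * ‖x‖) := by linarith [h1]
      _ ≤ ‖B‖ * (1 + ‖x‖) ^ 2 := by
          exact mul_le_mul_of_nonneg_left h2 (norm_nonneg B)
noncomputable section
open ContinuousLinearMap

abbrev Vsp := ℝ × EuclideanSpace ℝ (Fin 2)

def Smap : Vsp →L[ℝ] Vsp →L[ℝ] ℝ :=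
  (ContinuousLinearMap.mul ℝ ℝ).bilinearComp (fst ℝ ℝ _) (fst ℝ ℝ _) -
  ((innerSL ℝ (E := EuclideanSpace ℝ (Fin 2))).bilinearComp (snd ℝ ℝ _) (snd ℝ ℝ _))

def Bmap : Vsp →L[ℝ] Vsp →L[ℝ] Vsp :=
  ((ContinuousLinearMap.compL ℝ Vsp ℝ Vsp) (inl ℝ ℝ _)).comp Smap

def Lmap : Vsp →L[ℝ] Vsp := (inr ℝ ℝ _).comp (snd ℝ ℝ _)

def gmap : Vsp → Vsp := (fun x => Bmap x x) + ⇑Lmap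

lemma gmap_apply (x : Vsp) : gmap x = (x.1 ^ 2 - ‖x.2‖ ^ 2, x.2) := by
  simp only [gmap, Bmap, Lmap, Smap, Pi.add_apply, ContinuousLinearMap.coe_comp',
    Function.comp_apply, ContinuousLinearMap.compL_apply, ContinuousLinearMap.sub_apply,
    ContinuousLinearMap.bilinearComp_apply, ContinuousLinearMap.mul_apply',
    innerSL_apply_apply, ContinuousLinearMap.inl_apply, ContinuousLinearMap.inr_apply,
    ContinuousLinearMap.coe_fst', ContinuousLinearMap.coe_snd', ContinuousLinearMap.map_sub,
    Prod.mk_sub_mk, Prod.mk_add_mk, add_zero, zero_add, sub_zero]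
  rw [Prod.ext_iff]
  refine ⟨?_, ?_⟩
  · show x.1 * x.1 - inner ℝ x.2 x.2 = x.1 ^ 2 - ‖x.2‖ ^ 2
    rw [real_inner_self_eq_norm_sq]; ring
  · rfl

lemma gmap_htg : Function.HasTemperateGrowth gmap :=
  htg_add (htg_quad Bmap) Lmap.hasTemperateGrowth

lemma gmap_upper : ∃ (k : ℕ) (C : ℝ), ∀ x : Vsp, ‖x‖ ≤ C * (1 + ‖gmap x‖) ^ k := by
  refine ⟨1, 1, fun x => ?_⟩
  rw [one_mul, pow_one]
  have hx : ‖x‖ = max |x.1| ‖x.2‖ := by rw [Prod.norm_def, Real.norm_eq_abs]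
  have hgx : ‖gmap x‖ = max |x.1 ^ 2 - ‖x.2‖ ^ 2| ‖x.2‖ := by
    rw [gmap_apply x, Prod.norm_def, Real.norm_eq_abs]
  have h1 : ‖x.2‖ ≤ ‖gmap x‖ := hgx ▸ le_max_right _ _
  have h2 : |x.1 ^ 2 - ‖x.2‖ ^ 2| ≤ ‖gmap x‖ := hgx ▸ le_max_left _ _
  have h3 : x.1 ^ 2 ≤ ‖gmap x‖ + ‖gmap x‖ ^ 2 := by
    have h5 : x.1 ^ 2 - ‖x.2‖ ^ 2 ≤ |x.1 ^ 2 - ‖x.2‖ ^ 2| := le_abs_self _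
    nlinarith [norm_nonneg x.2, abs_nonneg (x.1 ^ 2 - ‖x.2‖ ^ 2)]
  have h4 : |x.1| ≤ 1 + ‖gmap x‖ := by
    have hg0 : 0 ≤ ‖gmap x‖ := norm_nonneg _
    have h6 : x.1 ^ 2 ≤ (1 + ‖gmap x‖) ^ 2 := by nlinarith
    nlinarith [abs_nonneg x.1, sq_abs x.1]
  rw [hx]
  exact max_le h4 (h1.trans (by linarith [norm_nonneg (gmap x)]))

set_option maxHeartbeats 1000000 in
set_option synthInstance.maxHeartbeats 400000 in
theorem stmt11 :
    ∃ E₁ : SchwartzMap (ℝ × EuclideanSpace ℝ (Fin 2)) ℂ →L[ℂ]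
        SchwartzMap (ℝ × EuclideanSpace ℝ (Fin 2)) ℂ,
      ∀ ψ : SchwartzMap (ℝ × EuclideanSpace ℝ (Fin 2)) ℂ,
        (∀ (ω : ℝ) (σ : EuclideanSpace ℝ (Fin 2)),
          E₁ ψ (ω, σ) = 8 * (π : ℂ) * Complex.I * ψ (ω ^ 2 - ‖σ‖ ^ 2, σ)) ∧
        (∀ (ω : ℝ) (σ : EuclideanSpace ℝ (Fin 2)), E₁ ψ (-ω, σ) = E₁ ψ (ω, σ)) := by
  refine ⟨(8 * (π : ℂ) * Complex.I) • SchwartzMap.compCLM (F := ℂ) ℂ gmap_htg gmap_upper, fun ψ => ?_⟩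
  have key : ∀ (ω : ℝ) (σ : EuclideanSpace ℝ (Fin 2)),
      ((8 * (π : ℂ) * Complex.I) • SchwartzMap.compCLM (F := ℂ) ℂ gmap_htg gmap_upper) ψ (ω, σ) =
        8 * (π : ℂ) * Complex.I * ψ (ω ^ 2 - ‖σ‖ ^ 2, σ) := by
    intro ω σ
    have h1 : (SchwartzMap.compCLM (F := ℂ) ℂ gmap_htg gmap_upper ψ) (ω, σ) = ψ (gmap (ω, σ)) := by
      rw [SchwartzMap.compCLM_apply]; rfl
    rw [ContinuousLinearMap.smul_apply, SchwartzMap.smul_apply, h1, gmap_apply (ω, σ)]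
    rw [smul_eq_mul]
  refine ⟨key, fun ω σ => ?_⟩
  rw [key, key, neg_pow ω 2]
  norm_num

end
end

section
/- Let u : ℝ → ℂ be a bounded measurable function and b ∈ ℂ such that the function ω ↦ u(ω) − b/(ω + i) is integrable on ℝ. Then there exists a bounded measurable function r : ℝ → ℂ such that for every Schwartz function φ : ℝ → ℂ, ∫_ℝ u(ω) · ( (1/√(2π)) ∫_ℝ φ(t) e^{iωt} dt ) dω = ∫_ℝ r(t) φ(t) dt (both integrals being absolutely convergent). In other words, a tempered distribution whose Fourier transform is a bounded function admitting the first-order asymptotic expansion b/(ω+i) + L¹-remainder at infinity is itself represented by a bounded function. -/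
open MeasureTheory Real Complex Set Filter
open scoped FourierTransform Topology


lemma aux_exp_Ioi (c : ℂ) (hc : c.re < 0) :
    ∫ s in Set.Ioi (0:ℝ), Complex.exp (c * s) = -c⁻¹ := by
  have hc0 : c ≠ 0 := by intro h; rw [h] at hc; simp at hc
  have hderiv : ∀ x ∈ Set.Ici (0:ℝ),
      HasDerivAt (fun s : ℝ => Complex.exp (c * s) / c) (Complex.exp (c * x)) x := by
    intro x _
    have h1 : HasDerivAt (fun s : ℝ => c * (s:ℂ)) c x := by
      simpa using (Complex.ofRealCLM.hasDerivAt (x := x)).const_mul c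
    have h2 : HasDerivAt (fun s : ℝ => Complex.exp (c * s)) (Complex.exp (c * x) * c) x :=
      (Complex.hasDerivAt_exp (c * x)).comp x h1
    have h3 := h2.div_const c
    simpa [mul_div_cancel_right₀ _ hc0] using h3
  have hnorm : ∀ s : ℝ, ‖Complex.exp (c * s)‖ = Real.exp (c.re * s) := by
    intro s
    rw [Complex.norm_exp]
    congr 1
    simp [Complex.mul_re]
  have hint : MeasureTheory.IntegrableOn (fun s : ℝ => Complex.exp (c * s)) (Set.Ioi (0:ℝ)) := by
    have h := exp_neg_integrableOn_Ioi 0 (b := -c.re) (by linarith)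
    refine h.mono' ?_ ?_
    · exact (Complex.continuous_exp.comp
        (continuous_const.mul Complex.continuous_ofReal)).aestronglyMeasurable
    · filter_upwards with s
      rw [hnorm s]; simp
  have htend : Filter.Tendsto (fun s : ℝ => Complex.exp (c * s) / c) Filter.atTop (𝓝 0) := by
    rw [tendsto_zero_iff_norm_tendsto_zero]
    have heq : (fun s : ℝ => ‖Complex.exp (c*s)/c‖) = fun s => Real.exp (c.re * s) / ‖c‖ := by
      ext s; rw [norm_div, hnorm s]
    rw [heq]
    have h1 : Filter.Tendsto (fun s : ℝ => c.re * s) Filter.atTop Filter.atBot :=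
      Filter.tendsto_id.const_mul_atTop_of_neg hc
    have := Real.tendsto_exp_atBot.comp h1
    simpa using this.div_const ‖c‖
  have := integral_Ioi_of_hasDerivAt_of_tendsto' hderiv hint htend
  rw [this]
  simp [div_eq_mul_inv]

lemma aux_inv (ω : ℝ) :
    ((ω:ℂ) + Complex.I)⁻¹
      = -Complex.I * ∫ s in Set.Ioi (0:ℝ), Complex.exp ((Complex.I * ω - 1) * s) := by
  rw [aux_exp_Ioi (Complex.I * ω - 1) (by simp [Complex.sub_re, Complex.mul_re])]
  have key : Complex.I * ((ω:ℂ) + Complex.I) = Complex.I * ω - 1 := by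
    rw [mul_add, Complex.I_mul_I]; ring
  rw [neg_mul_neg, ← key, mul_inv, ← mul_assoc, mul_inv_cancel₀ Complex.I_ne_zero, one_mul]

lemma aux_fourier_eq (f : ℝ → ℂ) (x : ℝ) :
    (∫ t : ℝ, f t * Complex.exp (Complex.I * ((x * t : ℝ) : ℂ))) = 𝓕 f (-x / (2 * π)) := by
  rw [Real.fourier_real_eq_integral_exp_smul]
  refine integral_congr_ae (Filter.Eventually.of_forall fun t => ?_)
  simp only [smul_eq_mul]
  rw [mul_comm]
  congr 1
  have h2 : -2 * π * t * (-x / (2 * π)) = x * t := by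
    field_simp
  rw [h2]
  ring

lemma aux_fourier_eq' (f : ℝ → ℂ) (x : ℝ) :
    (∫ t : ℝ, f t * Complex.exp (Complex.I * ((t * x : ℝ) : ℂ))) = 𝓕 f (-x / (2 * π)) := by
  have h : ∀ t : ℝ, (t * x : ℝ) = (x * t : ℝ) := fun t => mul_comm t x
  simp_rw [h]
  exact aux_fourier_eq f x

lemma aux_inner (φ ψ : SchwartzMap ℝ ℂ) (hψc : ⇑ψ = 𝓕 ⇑φ) (s : ℝ) :
    (∫ ω : ℝ, ψ (-ω / (2 * π))
        * Complex.exp (Complex.I * ((ω * s : ℝ) : ℂ)))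
      = ((2 * π : ℝ) : ℂ) * φ (-s) := by
  set g : ℝ → ℂ := fun ξ => Complex.exp (((-2 * π * ξ * s : ℝ) : ℂ) * Complex.I) • ψ ξ with hg
  have hcomp : ∀ ω : ℝ,
      ψ (-ω / (2 * π)) * Complex.exp (Complex.I * ((ω * s : ℝ) : ℂ))
        = g ((-1 / (2 * π)) * ω) := by
    intro ω
    have harg : (-1 / (2 * π)) * ω = -ω / (2 * π) := by ring
    rw [hg]
    simp only [harg, smul_eq_mul]
    rw [mul_comm]
    congr 1
    have h2 : (-2 * π * (-ω / (2 * π)) * s : ℝ) = ω * s := by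
      field_simp
    rw [h2]
    ring
  simp_rw [hcomp]
  rw [MeasureTheory.Measure.integral_comp_mul_left g (-1 / (2 * π))]
  have hginv : 𝓕 ⇑ψ s = φ (-s) := by
    have h1 : 𝓕⁻ (𝓕 ⇑φ) = ⇑φ :=
      φ.continuous.fourierInv_fourier_eq φ.integrable
        (by rw [← hψc]; exact ψ.integrable)
    calc 𝓕 ⇑ψ s = 𝓕 (𝓕 ⇑φ) s := by rw [hψc]
      _ = 𝓕⁻ (𝓕 ⇑φ) (-s) := by
          rw [Real.fourierInv_eq_fourier_neg, neg_neg]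
      _ = φ (-s) := by rw [h1]
  have hgint : ∫ ξ, g ξ = 𝓕 ⇑ψ s := by
    rw [Real.fourier_real_eq_integral_exp_smul]
  rw [hgint, hginv]
  rw [show ((-1 / (2 * π) : ℝ))⁻¹ = -(2 * π) by field_simp]
  rw [abs_neg, abs_of_pos Real.two_pi_pos]
  simp [Complex.real_smul]

set_option maxHeartbeats 1000000 in
theorem stmt16 (u : ℝ → ℂ) (b : ℂ)
    (humeas : Measurable u) (hubdd : ∃ C : ℝ, ∀ ω : ℝ, ‖u ω‖ ≤ C)
    (hL1 : Integrable (fun ω : ℝ => u ω - b / ((ω : ℂ) + Complex.I))) :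
    ∃ r : ℝ → ℂ, Measurable r ∧ (∃ C : ℝ, ∀ t : ℝ, ‖r t‖ ≤ C) ∧
      ∀ φ : SchwartzMap ℝ ℂ,
        Integrable (fun ω : ℝ =>
          u ω * (((1 / Real.sqrt (2 * π) : ℝ) : ℂ) *
            ∫ t : ℝ, φ t * Complex.exp (Complex.I * ((ω * t : ℝ) : ℂ)))) ∧
        Integrable (fun t : ℝ => r t * φ t) ∧
        (∫ ω : ℝ, u ω * (((1 / Real.sqrt (2 * π) : ℝ) : ℂ) *
            ∫ t : ℝ, φ t * Complex.exp (Complex.I * ((ω * t : ℝ) : ℂ))))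
          = ∫ t : ℝ, r t * φ t := by
  classical
  obtain ⟨Cu, hCu⟩ := hubdd
  set cst : ℂ := ((1 / Real.sqrt (2 * π) : ℝ) : ℂ) with hcst
  set v : ℝ → ℂ := fun ω => u ω - b / ((ω : ℂ) + Complex.I) with hv
  -- basic facts about v
  have hbdiv_meas : Measurable (fun ω : ℝ => b / ((ω:ℂ) + Complex.I)) := by
    apply Measurable.const_div
    exact Complex.measurable_ofReal.add_const Complex.I
  have hbdiv_bdd : ∀ ω : ℝ, ‖b / ((ω:ℂ) + Complex.I)‖ ≤ ‖b‖ := by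
    intro ω
    rw [norm_div]
    have h1 : (1:ℝ) ≤ ‖(ω:ℂ) + Complex.I‖ := by
      have h := Complex.abs_im_le_norm ((ω:ℂ) + Complex.I)
      simpa using h
    exact div_le_self (norm_nonneg b) h1
  have hvmeas : Measurable v := humeas.sub hbdiv_meas
  have hvbdd : ∀ ω : ℝ, ‖v ω‖ ≤ Cu + ‖b‖ := by
    intro ω
    calc ‖v ω‖ ≤ ‖u ω‖ + ‖b / ((ω:ℂ) + Complex.I)‖ := norm_sub_le _ _
      _ ≤ Cu + ‖b‖ := add_le_add (hCu ω) (hbdiv_bdd ω)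
  -- the two pieces of r
  set r1 : ℝ → ℂ := fun t => cst * 𝓕 v (-t / (2 * π)) with hr1
  set r2 : ℝ → ℂ := fun t => (b * cst * (-Complex.I) * ((2 * π : ℝ) : ℂ)) *
      Set.indicator (Set.Iic (0:ℝ)) (fun t : ℝ => Complex.exp ((t:ℝ) : ℂ)) t with hr2
  have hFvcont : Continuous (𝓕 v) :=
    VectorFourier.fourierIntegral_continuous Real.continuous_fourierChar
      (by exact continuous_inner) hL1
  have hr1meas : Measurable r1 := by
    apply Measurable.const_mul
    exact (hFvcont.comp (continuous_id.neg.div_const (2*π))).measurable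
  have hr1bdd : ∀ t : ℝ, ‖r1 t‖ ≤ ‖cst‖ * ∫ ω, ‖v ω‖ := by
    intro t
    rw [hr1]
    simp only [norm_mul]
    gcongr
    exact VectorFourier.norm_fourierIntegral_le_integral_norm _ _ _ _ _
  have hr2meas : Measurable r2 := by
    apply Measurable.const_mul
    exact Measurable.indicator
      (Complex.measurable_exp.comp Complex.measurable_ofReal) measurableSet_Iic
  have hr2bdd : ∀ t : ℝ, ‖r2 t‖ ≤ ‖b * cst * (-Complex.I) * ((2 * π : ℝ) : ℂ)‖ := by
    intro t
    rw [hr2]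
    rw [norm_mul]
    have h1 : ‖Set.indicator (Set.Iic (0:ℝ)) (fun t : ℝ => Complex.exp ((t:ℝ) : ℂ)) t‖ ≤ 1 := by
      rw [Set.indicator_apply]
      split_ifs with ht
      · rw [Complex.norm_exp]
        simp only [Complex.ofReal_re]
        exact Real.exp_le_one_iff.mpr ht
      · simp
    exact mul_le_of_le_one_right (norm_nonneg _) h1
  set r : ℝ → ℂ := fun t => r1 t + r2 t with hr
  refine ⟨r, hr1meas.add hr2meas, ⟨‖cst‖ * (∫ ω, ‖v ω‖) + ‖b * cst * (-Complex.I) * ((2 * π : ℝ) : ℂ)‖,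
    fun t => (norm_add_le _ _).trans (add_le_add (hr1bdd t) (hr2bdd t))⟩, ?_⟩
  intro φ
  obtain ⟨ψ, hψc⟩ : ∃ ψ : SchwartzMap ℝ ℂ, ⇑ψ = 𝓕 ⇑φ :=
    ⟨SchwartzMap.fourierTransformCLM ℂ φ, rfl⟩
  have hFeq : ∀ ω : ℝ, (∫ t : ℝ, φ t * Complex.exp (Complex.I * ((ω * t : ℝ):ℂ)))
      = ψ (-ω / (2*π)) := fun ω => by rw [aux_fourier_eq (⇑φ) ω, ← hψc]
  have hψint : Integrable (fun ω : ℝ => ψ (-ω / (2*π))) := by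
    have h := (ψ.integrable (μ := volume)).comp_mul_left' (R := -1/(2*π))
      (by simp [Real.pi_ne_zero])
    refine h.congr (Eventually.of_forall fun x => ?_)
    congr 1; ring
  have hψintc : Integrable (fun ω : ℝ => cst * ψ (-ω / (2*π))) := hψint.const_mul cst
  have hI1 : Integrable (fun ω : ℝ => v ω * (cst * ψ (-ω/(2*π)))) :=
    hψintc.bdd_mul hvmeas.aestronglyMeasurable (Eventually.of_forall hvbdd)
  have hI2 : Integrable (fun ω : ℝ => (b / ((ω:ℂ)+Complex.I)) * (cst * ψ (-ω/(2*π)))) :=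
    hψintc.bdd_mul hbdiv_meas.aestronglyMeasurable (Eventually.of_forall hbdiv_bdd)
  have hIu : Integrable (fun ω : ℝ => u ω * (cst * ψ (-ω/(2*π)))) := by
    refine (hI1.add hI2).congr (Eventually.of_forall fun ω => ?_)
    simp only [Pi.add_apply, hv]; ring
  have hIr1 : Integrable (fun t : ℝ => r1 t * φ t) :=
    (φ.integrable (μ := volume)).bdd_mul hr1meas.aestronglyMeasurable
      (Eventually.of_forall hr1bdd)
  have hIr2 : Integrable (fun t : ℝ => r2 t * φ t) :=
    (φ.integrable (μ := volume)).bdd_mul hr2meas.aestronglyMeasurable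
      (Eventually.of_forall hr2bdd)
  refine ⟨hIu.congr (Eventually.of_forall fun ω => by simp only [← hFeq ω]), ?_, ?_⟩
  · refine (hIr1.add hIr2).congr (Eventually.of_forall fun t => ?_)
    simp only [Pi.add_apply, hr]; ring
  -- the main equality
  have hpart1 : (∫ ω : ℝ, v ω * (cst * ψ (-ω/(2*π)))) = ∫ t : ℝ, r1 t * φ t := by
    have hprod : Integrable (fun p : ℝ × ℝ =>
        v p.1 * (cst * (φ p.2 * Complex.exp (Complex.I * ((p.1 * p.2 : ℝ) : ℂ)))))
        (volume.prod volume) := by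
      have hmeas : AEStronglyMeasurable (fun p : ℝ × ℝ =>
          v p.1 * (cst * (φ p.2 * Complex.exp (Complex.I * ((p.1 * p.2 : ℝ) : ℂ)))))
          (volume.prod volume) := by
        apply Measurable.aestronglyMeasurable
        apply Measurable.mul (hvmeas.comp measurable_fst)
        apply Measurable.const_mul
        apply Measurable.mul (φ.continuous.measurable.comp measurable_snd)
        exact Complex.measurable_exp.comp
          ((Complex.measurable_ofReal.comp (measurable_fst.mul measurable_snd)).const_mul
            Complex.I)
      refine Integrable.mono' (g := fun p : ℝ × ℝ => ‖v p.1‖ * (‖cst‖ * ‖φ p.2‖))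
        (hL1.norm.mul_prod (((φ.integrable (μ := volume)).norm.const_mul ‖cst‖)))
        hmeas ?_
      refine Eventually.of_forall fun p => ?_
      have hexp : ‖Complex.exp (Complex.I * ((p.1 * p.2 : ℝ) : ℂ))‖ = 1 := by
        rw [Complex.norm_exp]
        simp [Complex.mul_re]
      rw [norm_mul, norm_mul, norm_mul, hexp, mul_one]
    have hswap := integral_integral_swap (f := fun ω t : ℝ =>
        v ω * (cst * (φ t * Complex.exp (Complex.I * ((ω * t : ℝ) : ℂ))))) hprod
    calc (∫ ω : ℝ, v ω * (cst * ψ (-ω/(2*π))))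
        = ∫ ω : ℝ, ∫ t : ℝ, v ω * (cst * (φ t * Complex.exp (Complex.I * ((ω * t : ℝ) : ℂ)))) := by
          refine integral_congr_ae (Eventually.of_forall fun ω => ?_)
          simp only [integral_const_mul, hFeq ω]
      _ = ∫ t : ℝ, ∫ ω : ℝ, v ω * (cst * (φ t * Complex.exp (Complex.I * ((ω * t : ℝ) : ℂ)))) :=
          hswap
      _ = ∫ t : ℝ, r1 t * φ t := by
          refine integral_congr_ae (Eventually.of_forall fun t => ?_)
          have h1 : ∀ ω : ℝ, v ω * (cst * (φ t * Complex.exp (Complex.I * ((ω * t : ℝ) : ℂ))))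
              = (cst * φ t) * (v ω * Complex.exp (Complex.I * ((ω * t : ℝ) : ℂ))) := fun ω => by
            ring
          simp_rw [h1]
          rw [integral_const_mul, aux_fourier_eq' v t]
          simp only [hr1]; ring
  have hpart2 : (∫ ω : ℝ, (b / ((ω:ℂ)+Complex.I)) * (cst * ψ (-ω/(2*π)))) = ∫ t : ℝ, r2 t * φ t := by
    have hprod2 : Integrable (fun p : ℝ × ℝ =>
        ψ (-p.1/(2*π)) * Complex.exp ((Complex.I * p.1 - 1) * p.2))
        (volume.prod (volume.restrict (Set.Ioi (0:ℝ)))) := by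
      have hmeas : AEStronglyMeasurable (fun p : ℝ × ℝ =>
          ψ (-p.1/(2*π)) * Complex.exp ((Complex.I * p.1 - 1) * p.2))
          (volume.prod (volume.restrict (Set.Ioi (0:ℝ)))) := by
        apply Measurable.aestronglyMeasurable
        apply Measurable.mul
        · exact ψ.continuous.measurable.comp
            ((measurable_fst (α := ℝ) (β := ℝ)).neg.div_const (2*π))
        · apply Complex.measurable_exp.comp
          apply Measurable.mul
          · exact (((Complex.measurable_ofReal.comp measurable_fst).const_mul
              Complex.I).sub_const 1)
          · exact Complex.measurable_ofReal.comp measurable_snd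
      refine Integrable.mono' (g := fun p : ℝ × ℝ => ‖ψ (-p.1/(2*π))‖ * Real.exp (-1 * p.2))
        (hψint.norm.mul_prod (exp_neg_integrableOn_Ioi 0 one_pos)) hmeas ?_
      refine Eventually.of_forall fun p => ?_
      rw [norm_mul]
      have hexp : ‖Complex.exp ((Complex.I * p.1 - 1) * p.2)‖ = Real.exp (-1 * p.2) := by
        rw [Complex.norm_exp]
        congr 1
        simp [Complex.mul_re, Complex.sub_re, Complex.sub_im, Complex.mul_im]
      rw [hexp]
    have hswap2 : (∫ ω : ℝ, ∫ s in Set.Ioi (0:ℝ),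
          ψ (-ω/(2*π)) * Complex.exp ((Complex.I * ω - 1) * s))
        = ∫ s in Set.Ioi (0:ℝ), ∫ ω : ℝ,
          ψ (-ω/(2*π)) * Complex.exp ((Complex.I * ω - 1) * s) :=
      integral_integral_swap hprod2
    have e4 : ∀ s : ℝ, (∫ ω : ℝ, ψ (-ω/(2*π)) * Complex.exp ((Complex.I * ω - 1) * s))
        = (((2*π:ℝ):ℂ) * φ (-s)) * Complex.exp (((-s:ℝ):ℂ)) := by
      intro s
      have hsplit : ∀ ω : ℝ, Complex.exp ((Complex.I * ω - 1) * s)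
          = Complex.exp (Complex.I * ((ω * s : ℝ):ℂ)) * Complex.exp (((-s:ℝ):ℂ)) := by
        intro ω
        rw [← Complex.exp_add]
        congr 1
        push_cast
        ring
      simp_rw [hsplit, ← mul_assoc]
      rw [integral_mul_const, aux_inner φ ψ hψc s]
    have e5 : (∫ s in Set.Ioi (0:ℝ), φ (-s) * Complex.exp (((-s:ℝ):ℂ)))
        = ∫ t : ℝ, Set.indicator (Set.Iic (0:ℝ)) (fun t : ℝ => Complex.exp ((t:ℝ):ℂ)) t * φ t := by
      have h := integral_comp_neg_Ioi (0:ℝ) (fun t : ℝ => φ t * Complex.exp ((t:ℝ):ℂ))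
      rw [neg_zero] at h
      calc (∫ s in Set.Ioi (0:ℝ), φ (-s) * Complex.exp (((-s:ℝ):ℂ)))
          = ∫ t in Set.Iic (0:ℝ), φ t * Complex.exp ((t:ℝ):ℂ) := h
        _ = ∫ t : ℝ, Set.indicator (Set.Iic (0:ℝ))
              (fun t : ℝ => φ t * Complex.exp ((t:ℝ):ℂ)) t := by
            rw [integral_indicator measurableSet_Iic]
        _ = _ := by
            refine integral_congr_ae (Eventually.of_forall fun t => ?_)
            simp only [Set.indicator_apply]
            split_ifs
            · ring
            · simp
    calc (∫ ω : ℝ, (b / ((ω:ℂ)+Complex.I)) * (cst * ψ (-ω/(2*π))))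
        = ∫ ω : ℝ, (b * cst) * (ψ (-ω/(2*π)) * (((ω:ℂ)+Complex.I)⁻¹)) := by
          refine integral_congr_ae (Eventually.of_forall fun ω => ?_)
          simp only [div_eq_mul_inv]; ring
      _ = (b * cst) * ∫ ω : ℝ, ψ (-ω/(2*π)) * (((ω:ℂ)+Complex.I)⁻¹) := integral_const_mul _ _
      _ = (b * cst) * ∫ ω : ℝ, -Complex.I * ∫ s in Set.Ioi (0:ℝ),
            ψ (-ω/(2*π)) * Complex.exp ((Complex.I * ω - 1) * s) := by
          congr 1
          refine integral_congr_ae (Eventually.of_forall fun ω => ?_)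
          simp only [aux_inv ω, ← integral_const_mul]
          refine integral_congr_ae (Eventually.of_forall fun s => ?_)
          ring
      _ = (b * cst) * (-Complex.I * ∫ s in Set.Ioi (0:ℝ), ∫ ω : ℝ,
            ψ (-ω/(2*π)) * Complex.exp ((Complex.I * ω - 1) * s)) := by
          rw [integral_const_mul, hswap2]
      _ = (b * cst) * (-Complex.I * ∫ s in Set.Ioi (0:ℝ),
            (((2*π:ℝ):ℂ) * φ (-s)) * Complex.exp (((-s:ℝ):ℂ))) := by
          congr 2
          exact integral_congr_ae (Eventually.of_forall fun s => e4 s)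
      _ = (b * cst) * (-Complex.I * (((2*π:ℝ):ℂ) * ∫ s in Set.Ioi (0:ℝ),
            φ (-s) * Complex.exp (((-s:ℝ):ℂ)))) := by
          congr 2
          rw [← integral_const_mul]
          refine integral_congr_ae (Eventually.of_forall fun s => ?_)
          ring
      _ = ∫ t : ℝ, r2 t * φ t := by
          rw [e5]
          rw [← integral_const_mul, ← integral_const_mul, ← integral_const_mul]
          refine integral_congr_ae (Eventually.of_forall fun t => ?_)
          simp only [hr2]; ring
  calc (∫ ω : ℝ, u ω * (cst * ∫ t : ℝ, φ t * Complex.exp (Complex.I * ((ω * t : ℝ) : ℂ))))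
      = ∫ ω : ℝ, u ω * (cst * ψ (-ω/(2*π))) := by
        refine integral_congr_ae (Eventually.of_forall fun ω => ?_)
        simp only [hFeq ω]
    _ = (∫ ω : ℝ, v ω * (cst * ψ (-ω/(2*π)))) + ∫ ω : ℝ, (b / ((ω:ℂ)+Complex.I)) * (cst * ψ (-ω/(2*π))) := by
        rw [← integral_add hI1 hI2]
        refine integral_congr_ae (Eventually.of_forall fun ω => ?_)
        simp only [Pi.add_apply, hv]; ring
    _ = (∫ t : ℝ, r1 t * φ t) + ∫ t : ℝ, r2 t * φ t := by rw [hpart1, hpart2]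
    _ = ∫ t : ℝ, r t * φ t := by
        rw [← integral_add hIr1 hIr2]
        refine integral_congr_ae (Eventually.of_forall fun t => ?_)
        simp only [Pi.add_apply, hr]; ring
end

section
/- Let h : ℝ³ → ℂ be a Schwartz function and fix ξ ∈ ℝ³. Then for every z in the open upper half-plane ℍ⁺ = {z ∈ ℂ : Im z > 0}, the integral F(z) = ∫_{ℝ³} e^{i z ‖ξ − y‖} · ‖ξ − y‖^{−1} · h(y) dy is absolutely convergent, and the function F is holomorphic (complex differentiable) on ℍ⁺. -/
open MeasureTheory Real Complex Metric Set

local notation "E3" => EuclideanSpace ℝ (Fin 3)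

lemma inv_norm_integrableOn_ball :
    IntegrableOn (fun x : E3 => ‖x‖⁻¹) (Metric.ball 0 1) volume := by
  have hmeas : Measurable fun x : E3 => ‖x‖⁻¹ := measurable_norm.inv
  refine ⟨hmeas.aestronglyMeasurable, ?_⟩
  set A : ℕ → Set E3 := fun n =>
    Metric.closedBall 0 ((2:ℝ)⁻¹ ^ n) \ Metric.ball 0 ((2:ℝ)⁻¹ ^ (n+1)) with hA
  have cover : Metric.ball (0:E3) 1 ⊆ {0} ∪ ⋃ n, A n := by
    intro x hx
    rcases eq_or_ne x 0 with rfl | hx0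
    · exact Or.inl rfl
    have hxn : 0 < ‖x‖ := norm_pos_iff.2 hx0
    have hx1 : ‖x‖ < 1 := by simpa using mem_ball_zero_iff.1 hx
    obtain ⟨m, hm⟩ : ∃ m : ℕ, (2:ℝ)⁻¹ ^ m < ‖x‖ :=
      exists_pow_lt_of_lt_one hxn (by norm_num)
    have hP : ∃ m, (2:ℝ)⁻¹ ^ m < ‖x‖ := ⟨m, hm⟩
    classical
    have hk_spec : (2:ℝ)⁻¹ ^ (Nat.find hP) < ‖x‖ := Nat.find_spec hP
    have hkpos : Nat.find hP ≠ 0 := by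
      intro h0
      rw [h0] at hk_spec; simp at hk_spec; linarith
    obtain ⟨n, hkn⟩ := Nat.exists_eq_succ_of_ne_zero hkpos
    rw [hkn] at hk_spec
    have hn : ¬ ((2:ℝ)⁻¹ ^ n < ‖x‖) := Nat.find_min hP (by omega)
    right
    refine mem_iUnion.2 ⟨n, ?_⟩
    constructor
    · exact mem_closedBall_zero_iff.2 (not_lt.1 hn)
    · intro hmem
      exact absurd (mem_ball_zero_iff.1 hmem) (not_lt.2 hk_spec.le)
  have c_lt : volume (Metric.ball (0:E3) 1) < ⊤ := measure_ball_lt_top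
  set c := volume (Metric.ball (0:E3) 1) with hc
  calc ∫⁻ x in Metric.ball (0:E3) 1, ‖(‖x‖⁻¹ : ℝ)‖₊
      ≤ ∫⁻ x in ({0} ∪ ⋃ n, A n : Set E3), ‖(‖x‖⁻¹ : ℝ)‖₊ := lintegral_mono_set cover
    _ ≤ (∫⁻ x in ({0} : Set E3), ‖(‖x‖⁻¹ : ℝ)‖₊)
          + ∫⁻ x in (⋃ n, A n), ‖(‖x‖⁻¹ : ℝ)‖₊ := lintegral_union_le _ _ _
    _ ≤ 0 + ∑' n, ∫⁻ x in A n, ‖(‖x‖⁻¹ : ℝ)‖₊ := by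
        gcongr
        · rw [setLIntegral_measure_zero]
          exact measure_singleton 0
        · exact lintegral_iUnion_le _ _
    _ ≤ 0 + ∑' n, (ENNReal.ofReal ((2:ℝ)^(n+1)) * (ENNReal.ofReal (((2:ℝ)⁻¹^n)^3) * c)) := by
        gcongr with n
        have hb : ∀ x ∈ A n, (‖(‖x‖⁻¹ : ℝ)‖₊ : ENNReal) ≤ ENNReal.ofReal ((2:ℝ)^(n+1)) := by
          intro x hx
          have h1 : (2:ℝ)⁻¹ ^ (n+1) ≤ ‖x‖ := by
            have := hx.2
            rw [mem_ball_zero_iff] at this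
            exact not_lt.1 this
          have h2 : ‖x‖⁻¹ ≤ (2:ℝ)^(n+1) :=
            calc ‖x‖⁻¹ ≤ ((2:ℝ)⁻¹ ^ (n+1))⁻¹ := by
                  apply inv_anti₀ (by positivity) h1
              _ = (2:ℝ)^(n+1) := by simp
          rw [← enorm_eq_nnnorm, Real.enorm_eq_ofReal (by positivity)]
          exact ENNReal.ofReal_le_ofReal h2
        calc ∫⁻ x in A n, ‖(‖x‖⁻¹ : ℝ)‖₊
            ≤ ∫⁻ _ in A n, ENNReal.ofReal ((2:ℝ)^(n+1)) := setLIntegral_mono measurable_const hb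
          _ = ENNReal.ofReal ((2:ℝ)^(n+1)) * volume (A n) := setLIntegral_const _ _
          _ ≤ ENNReal.ofReal ((2:ℝ)^(n+1)) * (ENNReal.ofReal (((2:ℝ)⁻¹^n)^3) * c) := by
              gcongr
              calc volume (A n) ≤ volume (Metric.closedBall (0:E3) ((2:ℝ)⁻¹^n)) :=
                    measure_mono diff_subset
                _ = ENNReal.ofReal (((2:ℝ)⁻¹^n)^(Module.finrank ℝ E3)) * c := by
                    rw [Measure.addHaar_closedBall _ _ (by positivity)]
                _ = ENNReal.ofReal (((2:ℝ)⁻¹^n)^3) * c := by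
                    norm_num [finrank_euclideanSpace_fin]
    _ < ⊤ := by
        rw [zero_add]
        have : ∀ n : ℕ, ENNReal.ofReal ((2:ℝ)^(n+1)) * (ENNReal.ofReal (((2:ℝ)⁻¹^n)^3) * c)
            = (ENNReal.ofReal 2 * c) * (ENNReal.ofReal (4⁻¹ : ℝ))^n := by
          intro n
          rw [← ENNReal.ofReal_pow (by norm_num), ← mul_assoc, ← ENNReal.ofReal_mul (by positivity),
            mul_comm (ENNReal.ofReal 2) c, mul_assoc, ← ENNReal.ofReal_mul (by norm_num),
            mul_comm c]
          congr 1
          rw [pow_succ, mul_comm ((2:ℝ)^n) 2, mul_assoc]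
          congr 1
          rw [← pow_mul, inv_pow, inv_pow]
          field_simp
          rw [← mul_pow, show (2:ℝ) * 4 = 2 ^ 3 by norm_num, ← pow_mul, mul_comm 3 n]
        rw [tsum_congr this, ENNReal.tsum_mul_left, ENNReal.tsum_geometric]
        refine ENNReal.mul_lt_top (ENNReal.mul_lt_top ENNReal.ofReal_lt_top c_lt) ?_
        exact ENNReal.inv_lt_top.2 (tsub_pos_of_lt (ENNReal.ofReal_lt_one.2 (by norm_num)))


lemma re_aux (z : ℂ) (r : ℝ) : (Complex.I * z * (r:ℂ)).re = -z.im * r := by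
  simp [Complex.mul_re, Complex.mul_im]

lemma norm_exp_aux (z : ℂ) (hz : 0 ≤ z.im) (r : ℝ) (hr : 0 ≤ r) :
    ‖Complex.exp (Complex.I * z * (r:ℂ))‖ ≤ 1 := by
  rw [Complex.norm_exp, re_aux]
  rw [Real.exp_le_one_iff]
  nlinarith

lemma g_integrable (h : SchwartzMap E3 ℂ) (ξ : E3) :
    Integrable (fun y : E3 => ‖ξ - y‖⁻¹ * ‖h y‖) volume := by
  have hmeas : Measurable fun y : E3 => ‖ξ - y‖⁻¹ * ‖h y‖ :=
    ((measurable_const.sub measurable_id).norm.inv.mul h.continuous.measurable.norm)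
  obtain ⟨C, -, hC⟩ := h.decay 0 0
  have hC' : ∀ x, ‖h x‖ ≤ C := by
    intro x
    simpa using hC x
  have hC0 : 0 ≤ C := le_trans (norm_nonneg _) (hC' 0)
  rw [← integrableOn_univ, ← Set.union_compl_self (Metric.ball ξ 1)]
  apply IntegrableOn.union
  · -- on ball ξ 1
    have base : Integrable (fun y : E3 =>
        Set.indicator (Metric.ball (0:E3) 1) (fun x => ‖x‖⁻¹) (ξ - y)) volume := by
      have h1 := (integrable_indicator_iff measurableSet_ball).2 inv_norm_integrableOn_ball
      exact (integrable_comp_sub_left _ ξ).2 h1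
    have heq : ∀ y : E3, Set.indicator (Metric.ball (0:E3) 1) (fun x => ‖x‖⁻¹) (ξ - y)
        = Set.indicator (Metric.ball ξ 1) (fun y => ‖ξ - y‖⁻¹) y := by
      intro y
      by_cases hy : y ∈ Metric.ball ξ 1
      · have : ξ - y ∈ Metric.ball (0:E3) 1 := by
          rw [mem_ball_zero_iff]
          rw [mem_ball, dist_eq_norm, ← norm_sub_rev] at hy
          exact hy
        rw [Set.indicator_of_mem this, Set.indicator_of_mem hy]
      · have : ξ - y ∉ Metric.ball (0:E3) 1 := by
          rw [mem_ball_zero_iff]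
          rw [mem_ball, dist_eq_norm, ← norm_sub_rev] at hy
          exact hy
        rw [Set.indicator_of_notMem this, Set.indicator_of_notMem hy]
    rw [funext heq, integrable_indicator_iff measurableSet_ball] at base
    apply Integrable.mono' (base.const_mul C)
    · exact hmeas.aestronglyMeasurable.restrict
    · refine Filter.Eventually.of_forall fun y => ?_
      have h1 : 0 ≤ ‖ξ - y‖⁻¹ := by positivity
      rw [Real.norm_of_nonneg (by positivity)]
      calc ‖ξ - y‖⁻¹ * ‖h y‖ ≤ ‖ξ - y‖⁻¹ * C := by
            apply mul_le_mul_of_nonneg_left (hC' y) h1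
        _ = C * ‖ξ - y‖⁻¹ := mul_comm _ _
  · -- on complement
    apply Integrable.mono' (h.integrable.norm.integrableOn)
    · exact hmeas.aestronglyMeasurable.restrict
    · refine (ae_restrict_mem measurableSet_ball.compl).mono fun y hy => ?_
      have h1 : (1:ℝ) ≤ ‖ξ - y‖ := by
        simp only [Set.mem_compl_iff, mem_ball, not_lt, dist_eq_norm] at hy
        calc (1:ℝ) ≤ ‖y - ξ‖ := hy
          _ = ‖ξ - y‖ := norm_sub_rev _ _
      have h2 : ‖ξ - y‖⁻¹ ≤ 1 := by
        rw [inv_le_one_iff₀]; right; exact h1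
      rw [Real.norm_of_nonneg (by positivity)]
      calc ‖ξ - y‖⁻¹ * ‖h y‖ ≤ 1 * ‖h y‖ :=
            mul_le_mul_of_nonneg_right h2 (norm_nonneg _)
        _ = ‖h y‖ := one_mul _


section main

variable (h : SchwartzMap E3 ℂ) (ξ : E3)

lemma meas_aux (z : ℂ) : AEStronglyMeasurable
    (fun y : E3 => Complex.exp (Complex.I * z * (‖ξ - y‖ : ℂ)) * ((‖ξ - y‖ : ℝ) : ℂ)⁻¹ * h y)
    volume := by
  have m1 : Measurable fun y : E3 => ((‖ξ - y‖ : ℝ) : ℂ) :=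
    Complex.measurable_ofReal.comp (measurable_const.sub measurable_id).norm
  exact (((Complex.measurable_exp.comp (m1.const_mul (Complex.I * z))).mul m1.inv).mul
    h.continuous.measurable).aestronglyMeasurable

lemma int_aux (z : ℂ) (hz : 0 < z.im) :
    Integrable (fun y : E3 =>
      Complex.exp (Complex.I * z * (‖ξ - y‖ : ℂ)) * ((‖ξ - y‖ : ℝ) : ℂ)⁻¹ * h y) volume := by
  apply Integrable.mono' (g_integrable h ξ) (meas_aux h ξ z)
  refine Filter.Eventually.of_forall fun y => ?_
  rw [norm_mul, norm_mul]
  have e1 : ‖(((‖ξ - y‖ : ℝ)) : ℂ)⁻¹‖ = ‖ξ - y‖⁻¹ := by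
    rw [norm_inv, Complex.norm_real, Real.norm_of_nonneg (norm_nonneg _)]
  rw [e1]
  calc ‖Complex.exp (Complex.I * z * (‖ξ - y‖ : ℂ))‖ * ‖ξ - y‖⁻¹ * ‖h y‖
      ≤ 1 * ‖ξ - y‖⁻¹ * ‖h y‖ := by
        gcongr
        exact norm_exp_aux z hz.le _ (norm_nonneg _)
    _ = ‖ξ - y‖⁻¹ * ‖h y‖ := by ring

lemma meas_deriv_aux (z : ℂ) : AEStronglyMeasurable
    (fun y : E3 => Complex.exp (Complex.I * z * (‖ξ - y‖ : ℂ)) * (Complex.I * (‖ξ - y‖ : ℂ))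
      * ((‖ξ - y‖ : ℝ) : ℂ)⁻¹ * h y) volume := by
  have m1 : Measurable fun y : E3 => ((‖ξ - y‖ : ℝ) : ℂ) :=
    Complex.measurable_ofReal.comp (measurable_const.sub measurable_id).norm
  exact ((((Complex.measurable_exp.comp (m1.const_mul (Complex.I * z))).mul
    (m1.const_mul Complex.I)).mul m1.inv).mul h.continuous.measurable).aestronglyMeasurable

theorem stmt17' :
    (∀ z : ℂ, 0 < z.im → Integrable (fun y : E3 =>
        Complex.exp (Complex.I * z * (‖ξ - y‖ : ℂ)) * ((‖ξ - y‖ : ℝ) : ℂ)⁻¹ * h y)) ∧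
    DifferentiableOn ℂ
      (fun z : ℂ => ∫ y : E3,
        Complex.exp (Complex.I * z * (‖ξ - y‖ : ℂ)) * ((‖ξ - y‖ : ℝ) : ℂ)⁻¹ * h y)
      {z : ℂ | 0 < z.im} := by
  refine ⟨fun z hz => int_aux h ξ z hz, ?_⟩
  intro z₀ hz₀
  simp only [Set.mem_setOf_eq] at hz₀
  set ε := z₀.im / 2 with hε
  have εpos : 0 < ε := by positivity
  have him : ∀ z ∈ Metric.ball z₀ ε, 0 < z.im := by
    intro z hzb
    rw [mem_ball, Complex.dist_eq] at hzb
    have h1 : |(z - z₀).im| ≤ ‖z - z₀‖ := Complex.abs_im_le_norm _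
    have h2 : |z.im - z₀.im| ≤ ‖z - z₀‖ := by simpa using h1
    have := abs_lt.1 (lt_of_le_of_lt h2 hzb)
    simp only [hε] at this ⊢
    linarith [this.1]
  have key := hasDerivAt_integral_of_dominated_loc_of_deriv_le (μ := volume)
    (F := fun z (y : E3) =>
      Complex.exp (Complex.I * z * (‖ξ - y‖ : ℂ)) * ((‖ξ - y‖ : ℝ) : ℂ)⁻¹ * h y)
    (F' := fun z (y : E3) =>
      Complex.exp (Complex.I * z * (‖ξ - y‖ : ℂ)) * (Complex.I * (‖ξ - y‖ : ℂ))
        * ((‖ξ - y‖ : ℝ) : ℂ)⁻¹ * h y)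
    (x₀ := z₀) (bound := fun y => ‖h y‖) (Metric.ball_mem_nhds z₀ εpos)
    (Filter.Eventually.of_forall fun z => meas_aux h ξ z)
    (int_aux h ξ z₀ hz₀)
    (meas_deriv_aux h ξ z₀)
    ?_ (h.integrable.norm) ?_
  · exact key.2.differentiableAt.differentiableWithinAt
  · -- bound
    refine Filter.Eventually.of_forall fun y => fun z hzb => ?_
    have hzim := him z hzb
    rw [norm_mul, norm_mul, norm_mul]
    have e1 : ‖(((‖ξ - y‖ : ℝ)) : ℂ)⁻¹‖ = ‖ξ - y‖⁻¹ := by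
      rw [norm_inv, Complex.norm_real, Real.norm_of_nonneg (norm_nonneg _)]
    have e2 : ‖Complex.I * ((‖ξ - y‖ : ℝ) : ℂ)‖ = ‖ξ - y‖ := by
      rw [norm_mul, Complex.norm_I, one_mul, Complex.norm_real,
        Real.norm_of_nonneg (norm_nonneg _)]
    rw [e1, e2]
    calc ‖Complex.exp (Complex.I * z * (‖ξ - y‖ : ℂ))‖ * ‖ξ - y‖ * ‖ξ - y‖⁻¹ * ‖h y‖
        ≤ 1 * ‖ξ - y‖ * ‖ξ - y‖⁻¹ * ‖h y‖ := by
          gcongr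
          exact norm_exp_aux z hzim.le _ (norm_nonneg _)
      _ = (‖ξ - y‖ * ‖ξ - y‖⁻¹) * ‖h y‖ := by ring
      _ ≤ 1 * ‖h y‖ := by
          gcongr
          exact mul_inv_le_one
      _ = ‖h y‖ := one_mul _
  · -- differentiability
    refine Filter.Eventually.of_forall fun y => fun z hzb => ?_
    have hd : HasDerivAt (fun w : ℂ => Complex.I * w * ((‖ξ - y‖ : ℝ) : ℂ))
        (Complex.I * ((‖ξ - y‖ : ℝ) : ℂ)) z := by
      simpa using ((hasDerivAt_id z).const_mul Complex.I).mul_const ((‖ξ - y‖ : ℝ) : ℂ)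
    have := (hd.cexp.mul_const (((‖ξ - y‖ : ℝ) : ℂ)⁻¹)).mul_const (h y)
    convert this using 1


end main

theorem stmt17 (h : SchwartzMap (EuclideanSpace ℝ (Fin 3)) ℂ)
    (ξ : EuclideanSpace ℝ (Fin 3)) :
    (∀ z : ℂ, 0 < z.im → Integrable (fun y : EuclideanSpace ℝ (Fin 3) =>
        Complex.exp (Complex.I * z * (‖ξ - y‖ : ℂ)) * ((‖ξ - y‖ : ℝ) : ℂ)⁻¹ * h y)) ∧
    DifferentiableOn ℂ
      (fun z : ℂ => ∫ y : EuclideanSpace ℝ (Fin 3),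
        Complex.exp (Complex.I * z * (‖ξ - y‖ : ℂ)) * ((‖ξ - y‖ : ℝ) : ℂ)⁻¹ * h y)
      {z : ℂ | 0 < z.im} := by
  exact stmt17' h ξ
end
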